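/- arXiv:1412.5110 — 5 statements merged into one kernel-verified Lean document; each statement's English description precedes it below -/
import Mathlib

section
/- If Γ is a K-quasiarc and δ ∈ (0,1), then there exists M₁ > 1 depending only on K such that for any two δ-partitions P, P' of Γ, the ratio M(Γ,P)/M(Γ,P') is at most M₁. -/
open Metric Set MeasureTheory ENNReal

lemma packing_bound (s R : ℝ) (hs : 0 < s) (c : EuclideanSpace ℝ (Fin 2)) (F : Finset ℕ)
    (p : ℕ → EuclideanSpace ℝ (Fin 2))
    (hp : ∀ i ∈ F, p i ∈ closedBall c R)
    (hsep : ∀ i ∈ F, ∀ j ∈ F, i ≠ j → s ≤ dist (p i) (p j)) :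
    (F.card : ℝ) * (s / 2) ^ 2 ≤ (R + s / 2) ^ 2 := by
  rcases F.eq_empty_or_nonempty with rfl | ⟨i0, hi0⟩
  · simpa using sq_nonneg (R + s / 2)
  have hR : 0 ≤ R := le_trans dist_nonneg (hp i0 hi0)
  have hdisj : (F : Set ℕ).PairwiseDisjoint (fun i => ball (p i) (s / 2)) := by
    intro i hi j hj hij
    exact ball_disjoint_ball (by linarith [hsep i hi j hj hij])
  have hsub : ∀ i ∈ F, ball (p i) (s / 2) ⊆ ball c (R + s / 2) := by
    intro i hi x hx
    have h1 : dist x (p i) < s / 2 := hx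
    have h2 : dist (p i) c ≤ R := hp i hi
    exact lt_of_le_of_lt (dist_triangle x (p i) c) (by linarith)
  have hmeas : volume (⋃ i ∈ F, ball (p i) (s / 2)) = ∑ i ∈ F, volume (ball (p i) (s / 2)) :=
    measure_biUnion_finset hdisj (fun i _ => measurableSet_ball)
  have hle : ∑ i ∈ F, volume (ball (p i) (s / 2)) ≤ volume (ball c (R + s / 2)) := by
    rw [← hmeas]
    exact measure_mono (Set.iUnion₂_subset hsub)
  have hball : ∀ (x : EuclideanSpace ℝ (Fin 2)) (r : ℝ), 0 ≤ r →
      volume (ball x r) = ENNReal.ofReal (r ^ 2) * volume (ball (0 : EuclideanSpace ℝ (Fin 2)) 1) := by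
    intro x r hr
    rw [Measure.addHaar_ball volume x hr, finrank_euclideanSpace_fin]
  have hB : volume (ball (0 : EuclideanSpace ℝ (Fin 2)) 1) ≠ 0 :=
    (measure_ball_pos volume 0 one_pos).ne'
  have hB' : volume (ball (0 : EuclideanSpace ℝ (Fin 2)) 1) ≠ ⊤ := measure_ball_lt_top.ne
  have key : (F.card : ℝ≥0∞) * ENNReal.ofReal ((s / 2) ^ 2) ≤ ENNReal.ofReal ((R + s / 2) ^ 2) := by
    have := hle
    rw [Finset.sum_congr rfl (fun i hi => hball (p i) (s / 2) (by linarith)),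
      hball c (R + s / 2) (by linarith), Finset.sum_const, nsmul_eq_mul, ← mul_assoc] at this
    exact (ENNReal.mul_le_mul_iff_left hB hB').mp this
  rw [← ENNReal.ofReal_natCast, ← ENNReal.ofReal_mul (by positivity)] at key
  exact (ENNReal.ofReal_le_ofReal_iff (by positivity)).mp key

lemma strictMono_of_succ (N : ℕ) (t : ℕ → ℝ) (h : ∀ i < N, t i < t (i + 1)) :
    ∀ i j, i < j → j ≤ N → t i < t j := by
  intro i j hij hjN
  induction j with
  | zero => omega
  | succ k ih =>
    rcases Nat.lt_succ_iff_lt_or_eq.mp hij with h' | h'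
    · exact lt_trans (ih h' (by omega)) (h k (by omega))
    · subst h'; exact h i (by omega)

/-- If `Γ` is a `K`-quasiarc and `δ ∈ (0,1)`, then there is `M₁ > 1`
depending only on `K` such that for any two `δ`-partitions `P, P'` of `Γ`,
`M(Γ,P)/M(Γ,P') ≤ M₁`. -/
theorem delta_partitions_comparable_index :
    ∀ K : ℝ, 1 < K → ∃ M₁ : ℝ, 1 < M₁ ∧
      ∀ γ : ℝ → EuclideanSpace ℝ (Fin 2),
        ContinuousOn γ (Set.Icc 0 1) →
        Set.InjOn γ (Set.Icc 0 1) →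
        (∀ a ∈ Set.Icc (0 : ℝ) 1, ∀ b ∈ Set.Icc (0 : ℝ) 1, a ≤ b →
          diam (γ '' Set.Icc a b) ≤ K * dist (γ a) (γ b)) →
        ∀ δ : ℝ, δ ∈ Set.Ioo (0 : ℝ) 1 →
        ∀ (N : ℕ) (t : ℕ → ℝ), 0 < N → t 0 = 0 → t N = 1 →
          (∀ i < N, t i < t (i + 1)) →
          (∀ i < N,
            δ / 2 * diam (γ '' Set.Icc 0 1) ≤ diam (γ '' Set.Icc (t i) (t (i + 1))) ∧
            diam (γ '' Set.Icc (t i) (t (i + 1))) ≤ δ * diam (γ '' Set.Icc 0 1)) →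
        ∀ (N' : ℕ) (t' : ℕ → ℝ), 0 < N' → t' 0 = 0 → t' N' = 1 →
          (∀ i < N', t' i < t' (i + 1)) →
          (∀ i < N',
            δ / 2 * diam (γ '' Set.Icc 0 1) ≤ diam (γ '' Set.Icc (t' i) (t' (i + 1))) ∧
            diam (γ '' Set.Icc (t' i) (t' (i + 1))) ≤ δ * diam (γ '' Set.Icc 0 1)) →
          ((∑ i ∈ Finset.range N, diam (γ '' Set.Icc (t i) (t (i + 1)))) /
              diam (γ '' Set.Icc 0 1)) /
            ((∑ i ∈ Finset.range N', diam (γ '' Set.Icc (t' i) (t' (i + 1)))) /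
              diam (γ '' Set.Icc 0 1)) ≤ M₁ := by
  intro K hK
  set n₀ : ℕ := ⌈(4 * K + 1) ^ 2⌉₊ with hn₀def
  have hn₀pos : 0 < n₀ := by
    rw [hn₀def]
    exact Nat.ceil_pos.mpr (by nlinarith)
  have hn₀R1 : (1:ℝ) ≤ (n₀ : ℝ) := by exact_mod_cast hn₀pos
  refine ⟨2 * n₀, by linarith, ?_⟩
  intro γ hcont hinj h2pt δ hδ N t hN ht0 htN htmono hbounds N' t' hN' ht'0 ht'N ht'mono h'bounds
  obtain ⟨hδ0, hδ1⟩ := hδ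
  set D := diam (γ '' Set.Icc (0:ℝ) 1) with hDdef
  -- basic monotonicity facts
  have tmono : ∀ i j, i ≤ j → j ≤ N → t i ≤ t j := by
    intro i j hij hjN
    rcases eq_or_lt_of_le hij with rfl | h
    · exact le_rfl
    · exact (strictMono_of_succ N t htmono i j h hjN).le
  have t'mono : ∀ i j, i ≤ j → j ≤ N' → t' i ≤ t' j := by
    intro i j hij hjN
    rcases eq_or_lt_of_le hij with rfl | h
    · exact le_rfl
    · exact (strictMono_of_succ N' t' ht'mono i j h hjN).le
  have htmem : ∀ i ≤ N, t i ∈ Set.Icc (0:ℝ) 1 := by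
    intro i hi
    constructor
    · rw [← ht0]; exact tmono 0 i (Nat.zero_le _) hi
    · rw [← htN]; exact tmono i N hi le_rfl
  have ht'mem : ∀ i ≤ N', t' i ∈ Set.Icc (0:ℝ) 1 := by
    intro i hi
    constructor
    · rw [← ht'0]; exact t'mono 0 i (Nat.zero_le _) hi
    · rw [← ht'N]; exact t'mono i N' hi le_rfl
  -- D > 0
  have hbdd : ∀ a b : ℝ, a ∈ Set.Icc (0:ℝ) 1 → b ∈ Set.Icc (0:ℝ) 1 →
      Bornology.IsBounded (γ '' Set.Icc a b) := by
    intro a b ha hb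
    exact ((isCompact_Icc.inter_right isClosed_Icc).image_of_continuousOn
      (hcont.mono Set.inter_subset_right)).isBounded.subset (by
        apply Set.image_subset_iff.mpr
        intro x hx
        exact Set.mem_image_of_mem γ ⟨hx, ⟨le_trans ha.1 hx.1, le_trans hx.2 hb.2⟩⟩)
  have hDpos : 0 < D := by
    have hne : γ 0 ≠ γ 1 := fun h => (zero_ne_one (hinj ⟨le_rfl, zero_le_one⟩ ⟨zero_le_one, le_rfl⟩ h))
    have : dist (γ 0) (γ 1) ≤ D :=
      dist_le_diam_of_mem (by simpa using hbdd 0 1 ⟨le_rfl, zero_le_one⟩ ⟨zero_le_one, le_rfl⟩)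
        (Set.mem_image_of_mem γ ⟨le_rfl, zero_le_one⟩) (Set.mem_image_of_mem γ ⟨zero_le_one, le_rfl⟩)
    exact lt_of_lt_of_le (dist_pos.mpr hne) this
  -- assignment f
  classical
  set f : ℕ → ℕ := fun i => Nat.findGreatest (fun j => t' j ≤ t i) (N' - 1) with hfdef
  have hfle : ∀ i, f i ≤ N' - 1 := fun i => Nat.findGreatest_le _
  have hflt : ∀ i, f i < N' := fun i => lt_of_le_of_lt (hfle i) (by omega)
  have hfl : ∀ i < N, t' (f i) ≤ t i := by
    intro i hi
    exact Nat.findGreatest_spec (P := fun j => t' j ≤ t i) (Nat.zero_le _)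
      (by show t' 0 ≤ t i; rw [ht'0]; exact (htmem i hi.le).1)
  have hfr : ∀ i < N, t i < t' (f i + 1) := by
    intro i hi
    by_cases h : f i + 1 ≤ N' - 1
    · have := Nat.findGreatest_is_greatest (P := fun j => t' j ≤ t i)
        (Nat.lt_succ_self (f i)) h
      exact lt_of_not_ge this
    · have : f i + 1 = N' := by have := hfle i; omega
      rw [this, ht'N]
      calc t i < t N := strictMono_of_succ N t htmono i N hi le_rfl
        _ = 1 := htN
  -- each fiber has at most n₀ elements
  have hfiber : ∀ j ∈ Finset.range N', ((Finset.range N).filter (fun i => f i = j)).card ≤ n₀ := by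
    intro j hj
    rw [Finset.mem_range] at hj
    set F := (Finset.range N).filter (fun i => f i = j) with hF
    have hmemF : ∀ i ∈ F, i < N ∧ f i = j := by
      intro i hi
      rw [hF, Finset.mem_filter, Finset.mem_range] at hi
      exact hi
    have hsubarc : ∀ i ∈ F, γ (t i) ∈ γ '' Set.Icc (t' j) (t' (j + 1)) := by
      intro i hi
      obtain ⟨hiN, hij⟩ := hmemF i hi
      exact Set.mem_image_of_mem γ ⟨by rw [← hij]; exact hfl i hiN, by rw [← hij]; exact (hfr i hiN).le⟩
    -- packing
    have hp : ∀ i ∈ F, γ (t i) ∈ closedBall (γ (t' j)) (δ * D) := by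
      intro i hi
      rw [mem_closedBall]
      calc dist (γ (t i)) (γ (t' j)) ≤ diam (γ '' Set.Icc (t' j) (t' (j + 1))) :=
            dist_le_diam_of_mem (hbdd _ _ (ht'mem j hj.le) (ht'mem (j+1) hj)) (hsubarc i hi)
              (Set.mem_image_of_mem γ ⟨le_rfl, (ht'mono j hj).le⟩)
        _ ≤ δ * D := (h'bounds j hj).2
    have hsep : ∀ i₁ ∈ F, ∀ i₂ ∈ F, i₁ ≠ i₂ → δ * D / (2 * K) ≤ dist (γ (t i₁)) (γ (t i₂)) := by
      have main : ∀ i₁ ∈ F, ∀ i₂ ∈ F, i₁ < i₂ → δ * D / (2 * K) ≤ dist (γ (t i₁)) (γ (t i₂)) := by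
        intro i₁ hi₁ i₂ hi₂ hlt
        obtain ⟨hi₁N, _⟩ := hmemF i₁ hi₁
        obtain ⟨hi₂N, _⟩ := hmemF i₂ hi₂
        have hsub : Set.Icc (t i₁) (t (i₁ + 1)) ⊆ Set.Icc (t i₁) (t i₂) :=
          Set.Icc_subset_Icc le_rfl (tmono (i₁ + 1) i₂ hlt hi₂N.le)
        have h1 : δ / 2 * D ≤ diam (γ '' Set.Icc (t i₁) (t i₂)) :=
          le_trans (hbounds i₁ hi₁N).1 (diam_mono (Set.image_mono hsub)
            (hbdd _ _ (htmem i₁ hi₁N.le) (htmem i₂ hi₂N.le)))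
        have h2 : diam (γ '' Set.Icc (t i₁) (t i₂)) ≤ K * dist (γ (t i₁)) (γ (t i₂)) :=
          h2pt _ (htmem i₁ hi₁N.le) _ (htmem i₂ hi₂N.le)
            (tmono i₁ i₂ hlt.le hi₂N.le)
        have hK0 : (0:ℝ) < K := lt_trans one_pos hK
        rw [div_le_iff₀ (by positivity)]
        nlinarith
      intro i₁ hi₁ i₂ hi₂ hne
      rcases lt_or_gt_of_ne hne with h | h
      · exact main i₁ hi₁ i₂ hi₂ h
      · rw [dist_comm]; exact main i₂ hi₂ i₁ hi₁ h
    have hpack := packing_bound (δ * D / (2 * K)) (δ * D) (by positivity) (γ (t' j)) F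
      (fun i => γ (t i)) hp hsep
    have hcard : (F.card : ℝ) ≤ (4 * K + 1) ^ 2 := by
      have hK0 : (0:ℝ) < K := lt_trans one_pos hK
      have hsd : (0:ℝ) < δ * D / (2 * K) / 2 := by positivity
      have heq : δ * D + δ * D / (2 * K) / 2 = (4 * K + 1) * (δ * D / (2 * K) / 2) := by
        field_simp; ring
      rw [heq, mul_pow] at hpack
      exact le_of_mul_le_mul_right hpack (pow_pos hsd 2)
    calc F.card ≤ ⌈(4 * K + 1) ^ 2⌉₊ := by exact_mod_cast hcard.trans (Nat.le_ceil _)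
      _ = n₀ := rfl
  -- N ≤ n₀ * N'
  have hmaps : ∀ i ∈ Finset.range N, f i ∈ Finset.range N' :=
    fun i _ => Finset.mem_range.mpr (hflt i)
  have hNle : N ≤ n₀ * N' := by
    calc N = (Finset.range N).card := (Finset.card_range N).symm
      _ ≤ n₀ * ((Finset.range N).image f).card :=
        Finset.card_le_mul_card_image _ n₀ (fun a ha => hfiber a (by
          obtain ⟨i, hi, rfl⟩ := Finset.mem_image.mp ha
          exact hmaps i hi))
      _ ≤ n₀ * N' := by
        apply Nat.mul_le_mul_left
        calc ((Finset.range N).image f).card ≤ (Finset.range N').card :=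
              Finset.card_le_card (fun a ha => by
                obtain ⟨i, hi, rfl⟩ := Finset.mem_image.mp ha
                exact hmaps i hi)
          _ = N' := Finset.card_range N'
  -- sums
  set S := ∑ i ∈ Finset.range N, diam (γ '' Set.Icc (t i) (t (i + 1))) with hS
  set S' := ∑ i ∈ Finset.range N', diam (γ '' Set.Icc (t' i) (t' (i + 1))) with hS'
  have hSle : S ≤ N * (δ * D) := by
    rw [hS]
    calc ∑ i ∈ Finset.range N, diam (γ '' Set.Icc (t i) (t (i + 1)))
        ≤ ∑ _i ∈ Finset.range N, δ * D :=
          Finset.sum_le_sum (fun i hi => (hbounds i (Finset.mem_range.mp hi)).2)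
      _ = N * (δ * D) := by rw [Finset.sum_const, Finset.card_range, nsmul_eq_mul]
  have hS'ge : (N' : ℝ) * (δ / 2 * D) ≤ S' := by
    rw [hS']
    calc (N' : ℝ) * (δ / 2 * D) = ∑ _i ∈ Finset.range N', δ / 2 * D := by
          rw [Finset.sum_const, Finset.card_range, nsmul_eq_mul]
      _ ≤ _ := Finset.sum_le_sum (fun i hi => (h'bounds i (Finset.mem_range.mp hi)).1)
  have hS'pos : 0 < S' := lt_of_lt_of_le (by positivity) hS'ge
  have hgoal : S / D / (S' / D) = S / S' := by
    field_simp
  rw [hgoal, div_le_iff₀ hS'pos]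
  have hNR : (N : ℝ) ≤ (n₀ : ℝ) * N' := by exact_mod_cast hNle
  have hN'pos : (0:ℝ) < N' := by exact_mod_cast hN'
  have hn₀R : (0:ℝ) < n₀ := by exact_mod_cast hn₀pos
  calc S ≤ N * (δ * D) := hSle
    _ ≤ (n₀ * N') * (δ * D) := by
        apply mul_le_mul_of_nonneg_right hNR (by positivity)
    _ = 2 * n₀ * (N' * (δ / 2 * D)) := by ring
    _ ≤ 2 * n₀ * S' := by
        apply mul_le_mul_of_nonneg_left hS'ge (by positivity)
end

section
/- Let Γ be a Jordan arc, 0 < δ < δ' < 1, and N > 1. Suppose every δ-partition of Γ has at least N elements. Then there exists a subarc Γ' ⊂ Γ and a δ'-partition P' of Γ' with |P'| ≥ N^{(log δ' + 1)/log(δδ'/2)}. -/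
open Metric Set

namespace JPartAux

variable {γ : ℝ → EuclideanSpace ℝ (Fin 2)}

lemma icc_sub {u v : ℝ} (hu : 0 ≤ u) (hv : v ≤ 1) : Icc u v ⊆ Icc 0 1 :=
  fun _ hx => ⟨hu.trans hx.1, hx.2.trans hv⟩

lemma bd (hcont : ContinuousOn γ (Icc 0 1)) {u v : ℝ} (hu : 0 ≤ u) (hv : v ≤ 1) :
    Bornology.IsBounded (γ '' Icc u v) :=
  (isCompact_Icc.image_of_continuousOn (hcont.mono (icc_sub hu hv))).isBounded

lemma dmono (hcont : ContinuousOn γ (Icc 0 1)) {u v u' v' : ℝ} (hu : 0 ≤ u) (hv : v ≤ 1)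
    (h1 : u ≤ u') (h2 : v' ≤ v) : diam (γ '' Icc u' v') ≤ diam (γ '' Icc u v) :=
  Metric.diam_mono (Set.image_mono (Icc_subset_Icc h1 h2)) (bd hcont hu hv)

lemma dtri (hcont : ContinuousOn γ (Icc 0 1)) {u v w : ℝ} (h1 : u ≤ v) (h2 : v ≤ w) :
    diam (γ '' Icc u w) ≤ diam (γ '' Icc u v) + diam (γ '' Icc v w) := by
  rw [← Set.Icc_union_Icc_eq_Icc h1 h2, Set.image_union]
  exact Metric.diam_union' ⟨γ v, Set.mem_image_of_mem _ (Set.right_mem_Icc.2 h1),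
    Set.mem_image_of_mem _ (Set.left_mem_Icc.2 h2)⟩

lemma dsmall (hcont : ContinuousOn γ (Icc 0 1)) {ε : ℝ} (hε : 0 < ε) :
    ∃ η > 0, ∀ a b : ℝ, 0 ≤ a → b ≤ 1 → b - a ≤ η → diam (γ '' Icc a b) ≤ ε := by
  have huc : UniformContinuousOn γ (Icc 0 1) :=
    isCompact_Icc.uniformContinuousOn_of_continuous hcont
  rw [Metric.uniformContinuousOn_iff] at huc
  obtain ⟨η', hη', H⟩ := huc ε hε
  refine ⟨η' / 2, by positivity, ?_⟩
  intro a b ha hb hab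
  apply Metric.diam_le_of_forall_dist_le hε.le
  rintro x ⟨s, hs, rfl⟩ y ⟨s', hs', rfl⟩
  have h1 : s ∈ Icc 0 1 := icc_sub ha hb hs
  have h2 : s' ∈ Icc 0 1 := icc_sub ha hb hs'
  have hd : dist s s' < η' := by
    rw [Real.dist_eq]
    have : |s - s'| ≤ b - a := abs_sub_le_iff.2
      ⟨by linarith [hs.1, hs.2, hs'.1, hs'.2], by linarith [hs.1, hs.2, hs'.1, hs'.2]⟩
    linarith
  exact (H s h1 s' h2 hd).le

lemma dcont (hcont : ContinuousOn γ (Icc 0 1)) {u : ℝ} (hu : 0 ≤ u) :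
    ContinuousOn (fun s => diam (γ '' Icc u s)) (Icc u 1) := by
  rw [Metric.continuousOn_iff]
  intro s hs ε hε
  obtain ⟨η, hη, H⟩ := dsmall hcont (show (0:ℝ) < ε / 2 by positivity)
  refine ⟨η, hη, ?_⟩
  intro s' hs' hd
  rw [Real.dist_eq] at hd ⊢
  rcases le_total s' s with h | h
  · have m1 : diam (γ '' Icc u s') ≤ diam (γ '' Icc u s) := dmono hcont hu hs.2 le_rfl h
    have m2 : diam (γ '' Icc u s) ≤ diam (γ '' Icc u s') + diam (γ '' Icc s' s) :=
      dtri hcont hs'.1 h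
    have m3 : diam (γ '' Icc s' s) ≤ ε / 2 := by
      refine H s' s (hu.trans hs'.1) hs.2 ?_
      have := abs_sub_le_iff.1 hd.le
      linarith [this.2]
    rw [abs_of_nonpos (by linarith)]
    linarith
  · have m1 : diam (γ '' Icc u s) ≤ diam (γ '' Icc u s') := dmono hcont hu hs'.2 le_rfl h
    have m2 : diam (γ '' Icc u s') ≤ diam (γ '' Icc u s) + diam (γ '' Icc s s') :=
      dtri hcont hs.1 h
    have m3 : diam (γ '' Icc s s') ≤ ε / 2 := by
      refine H s s' (hu.trans hs.1) hs'.2 ?_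
      have := abs_sub_le_iff.1 hd.le
      linarith [this.1]
    rw [abs_of_nonneg (by linarith)]
    linarith

lemma mono_t {M : ℕ} {t : ℕ → ℝ} (h : ∀ i < M, t i < t (i + 1)) :
    ∀ j ≤ M, ∀ i ≤ j, t i ≤ t j := by
  intro j
  induction j with
  | zero => intro _ i hi; interval_cases i; exact le_rfl
  | succ j ih =>
    intro hjM i hij
    rcases Nat.eq_or_lt_of_le hij with rfl | hlt
    · exact le_rfl
    · have h1 : t i ≤ t j := ih (by omega) i (by omega)
      have h2 : t j < t (j + 1) := h j (by omega)
      linarith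


lemma greedy_aux (hcont : ContinuousOn γ (Icc 0 1)) {c η : ℝ} (hc : 0 < c) (hη : 0 < η)
    (hsmall : ∀ a b : ℝ, 0 ≤ a → b ≤ 1 → b - a ≤ η → diam (γ '' Icc a b) ≤ c / 2) :
    ∀ (n : ℕ) (u v : ℝ), 0 ≤ u → u < v → v ≤ 1 → v - u ≤ n * η →
      c ≤ diam (γ '' Icc u v) →
      ∃ (M : ℕ) (t : ℕ → ℝ), 0 < M ∧ t 0 = u ∧ t M = v ∧ (∀ i < M, t i < t (i + 1)) ∧
        ∀ i < M, c ≤ diam (γ '' Icc (t i) (t (i + 1))) ∧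
          diam (γ '' Icc (t i) (t (i + 1))) ≤ 2 * c := by
  intro n
  induction n with
  | zero =>
    intro u v hu0 huv hv1 hfuel _
    exfalso
    simp only [Nat.cast_zero, zero_mul] at hfuel
    linarith
  | succ n ih =>
    intro u v hu0 huv hv1 hfuel hcd
    by_cases hd : diam (γ '' Icc u v) ≤ 2 * c
    · refine ⟨1, fun i => if i = 0 then u else v, one_pos, by simp, by simp, ?_, ?_⟩
      · intro i hi
        interval_cases i
        simpa using huv
      · intro i hi
        interval_cases i
        simpa using ⟨hcd, hd⟩
    · push_neg at hd
      have hfc : ContinuousOn (fun s => diam (γ '' Icc u s)) (Icc u v) :=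
        (dcont hcont hu0).mono (Icc_subset_Icc le_rfl hv1)
      have hfu : diam (γ '' Icc u u) = 0 := by
        rw [Set.Icc_self, Set.image_singleton, Metric.diam_singleton]
      have hmem : c ∈ Icc (diam (γ '' Icc u u)) (diam (γ '' Icc u v)) := by
        rw [hfu]; exact ⟨hc.le, hcd⟩
      obtain ⟨s, hsmem, hfs0⟩ := intermediate_value_Icc huv.le hfc hmem
      have hfs : diam (γ '' Icc u s) = c := hfs0
      clear hfs0
      have hus : u < s := by
        rcases eq_or_lt_of_le hsmem.1 with rfl | h
        · exfalso; rw [hfu] at hfs; linarith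
        · exact h
      have hrem : c ≤ diam (γ '' Icc s v) := by
        have := dtri hcont (u := u) (v := s) (w := v) hsmem.1 hsmem.2
        rw [hfs] at this
        linarith
      have hsv : s < v := by
        rcases eq_or_lt_of_le hsmem.2 with rfl | h
        · exfalso
          rw [Set.Icc_self, Set.image_singleton, Metric.diam_singleton] at hrem
          linarith
        · exact h
      have hstep : η < s - u := by
        by_contra hcon
        push_neg at hcon
        have := hsmall u s hu0 (hsv.le.trans hv1) hcon
        rw [hfs] at this
        linarith
      have hfuel' : v - s ≤ n * η := by
        push_cast at hfuel ⊢
        linarith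
      obtain ⟨M', t', hM', ht'0, ht'M, ht'inc, ht'p⟩ :=
        ih s v (hu0.trans hus.le) hsv hv1 hfuel' hrem
      set t : ℕ → ℝ := fun i => if i = 0 then u else t' (i - 1) with ht
      have htv0 : t 0 = u := rfl
      have htvS : ∀ j : ℕ, t (j + 1) = t' j := by
        intro j
        simp only [ht, if_neg (Nat.succ_ne_zero j), Nat.add_sub_cancel]
      refine ⟨M' + 1, t, Nat.succ_pos _, htv0, ?_, ?_, ?_⟩
      · rw [htvS M', ht'M]
      · intro i hi
        match i with
        | 0 => rw [htv0, htvS 0, ht'0]; exact hus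
        | (j+1) => rw [htvS j, htvS (j+1)]; exact ht'inc j (by omega)
      · intro i hi
        match i with
        | 0 =>
          rw [htv0, htvS 0, ht'0, hfs]
          exact ⟨le_rfl, by linarith⟩
        | (j+1) =>
          rw [htvS j, htvS (j+1)]
          exact ht'p j (by omega)

lemma greedy (hcont : ContinuousOn γ (Icc 0 1)) {c : ℝ} (hc : 0 < c) (u v : ℝ)
    (hu0 : 0 ≤ u) (huv : u < v) (hv1 : v ≤ 1) (hcd : c ≤ diam (γ '' Icc u v)) :
    ∃ (M : ℕ) (t : ℕ → ℝ), 0 < M ∧ t 0 = u ∧ t M = v ∧ (∀ i < M, t i < t (i + 1)) ∧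
      ∀ i < M, c ≤ diam (γ '' Icc (t i) (t (i + 1))) ∧
        diam (γ '' Icc (t i) (t (i + 1))) ≤ 2 * c := by
  obtain ⟨η, hη, hsmall⟩ := dsmall hcont (show (0:ℝ) < c / 2 by positivity)
  obtain ⟨n, hn⟩ := exists_nat_ge ((v - u) / η)
  have hfuel : v - u ≤ n * η := by
    rw [div_le_iff₀ hη] at hn
    exact hn
  exact greedy_aux hcont hc hη hsmall n u v hu0 huv hv1 hfuel hcd


lemma sum_diam (hcont : ContinuousOn γ (Icc 0 1)) :
    ∀ (M : ℕ) (t : ℕ → ℝ), 0 < M → (∀ i < M, t i < t (i + 1)) →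
      diam (γ '' Icc (t 0) (t M)) ≤ ∑ i ∈ Finset.range M, diam (γ '' Icc (t i) (t (i + 1))) := by
  intro M
  induction M with
  | zero => intro t h; omega
  | succ M ih =>
    intro t _ hinc
    rcases Nat.eq_zero_or_pos M with rfl | hM
    · simp
    · have h1 : t 0 ≤ t M := mono_t hinc M (by omega) 0 (by omega)
      have h2 : t M ≤ t (M + 1) := (hinc M (by omega)).le
      have htri := dtri hcont (u := t 0) (v := t M) (w := t (M + 1)) h1 h2
      have hih := ih t hM (fun i hi => hinc i (by omega))
      rw [Finset.sum_range_succ]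
      linarith

lemma append {P : ℝ → ℝ → Prop} {J₁ J₂ : ℕ} {w₁ w₂ : ℕ → ℝ} {a b c : ℝ}
    (h1 : 0 < J₁) (h2 : 0 < J₂) (hw10 : w₁ 0 = a) (hw1J : w₁ J₁ = b)
    (hw20 : w₂ 0 = b) (hw2J : w₂ J₂ = c)
    (hinc1 : ∀ j < J₁, w₁ j < w₁ (j + 1)) (hinc2 : ∀ j < J₂, w₂ j < w₂ (j + 1))
    (hp1 : ∀ j < J₁, P (w₁ j) (w₁ (j + 1))) (hp2 : ∀ j < J₂, P (w₂ j) (w₂ (j + 1))) :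
    ∃ w : ℕ → ℝ, w 0 = a ∧ w (J₁ + J₂) = c ∧ (∀ j < J₁ + J₂, w j < w (j + 1)) ∧
      ∀ j < J₁ + J₂, P (w j) (w (j + 1)) := by
  set w : ℕ → ℝ := fun k => if k < J₁ then w₁ k else w₂ (k - J₁) with hwdef
  have hwlt : ∀ k, k < J₁ → w k = w₁ k := fun k hk => if_pos hk
  have hwge : ∀ k, J₁ ≤ k → w k = w₂ (k - J₁) := fun k hk => if_neg (by omega)
  have hstep : ∀ j, j < J₁ + J₂ → w j < w (j + 1) ∧ P (w j) (w (j + 1)) := by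
    intro j hj
    rcases lt_trichotomy (j + 1) J₁ with h | h | h
    · rw [hwlt j (by omega), hwlt (j + 1) h]
      exact ⟨hinc1 j (by omega), hp1 j (by omega)⟩
    · have e : w (j + 1) = w₁ (j + 1) := by
        rw [hwge (j + 1) (by omega)]
        have e0 : (j + 1) - J₁ = 0 := by omega
        rw [e0, hw20, ← hw1J, h]
      rw [hwlt j (by omega), e]
      exact ⟨hinc1 j (by omega), hp1 j (by omega)⟩
    · rw [hwge j (by omega), hwge (j + 1) (by omega)]
      have e1 : (j + 1) - J₁ = (j - J₁) + 1 := by omega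
      rw [e1]
      exact ⟨hinc2 _ (by omega), hp2 _ (by omega)⟩
  refine ⟨w, ?_, ?_, fun j hj => (hstep j hj).1, fun j hj => (hstep j hj).2⟩
  · rw [hwlt 0 h1, hw10]
  · rw [hwge (J₁ + J₂) (by omega)]
    have : (J₁ + J₂) - J₁ = J₂ := by omega
    rw [this, hw2J]


lemma cover (hcont : ContinuousOn γ (Icc 0 1)) {δ' B c₀ : ℝ}
    (hδ'0 : 0 < δ') (hδ'1 : δ' < 1) (hc₀ : 0 < c₀) (hB1 : 1 ≤ B)
    (hA : ∀ (u v : ℝ) (M : ℕ) (t : ℕ → ℝ), 0 ≤ u → u < v → v ≤ 1 → 0 < M →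
      t 0 = u → t M = v → (∀ i < M, t i < t (i + 1)) →
      (∀ i < M, δ' / 2 * diam (γ '' Icc u v) ≤ diam (γ '' Icc (t i) (t (i + 1))) ∧
        diam (γ '' Icc (t i) (t (i + 1))) ≤ δ' * diam (γ '' Icc u v)) →
      (M : ℝ) < B) :
    ∀ (r : ℕ) (u v : ℝ), 0 ≤ u → u < v → v ≤ 1 → diam (γ '' Icc u v) < c₀ / δ' ^ r →
      ∃ (J : ℕ) (w : ℕ → ℝ), 0 < J ∧ w 0 = u ∧ w J = v ∧ (∀ j < J, w j < w (j + 1)) ∧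
        (∀ j < J, diam (γ '' Icc (w j) (w (j + 1))) < c₀) ∧ (J : ℝ) ≤ B ^ r := by
  intro r
  induction r with
  | zero =>
    intro u v hu0 huv hv1 hdd
    rw [pow_zero, div_one] at hdd
    exact ⟨1, fun j => if j = 0 then u else v, one_pos, by simp, by simp, by
        intro j hj; interval_cases j; simpa using huv, by
        intro j hj; interval_cases j; simpa using hdd, by simp⟩
  | succ r ih =>
    intro u v hu0 huv hv1 hdd
    by_cases hsm : diam (γ '' Icc u v) < c₀
    · refine ⟨1, fun j => if j = 0 then u else v, one_pos, by simp, by simp, by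
        intro j hj; interval_cases j; simpa using huv, by
        intro j hj; interval_cases j; simpa using hsm, ?_⟩
      have : (1:ℝ) ^ (r+1) ≤ B ^ (r+1) := pow_le_pow_left₀ (by norm_num) hB1 (r+1)
      simpa using this
    · push_neg at hsm
      have hdd0 : 0 < diam (γ '' Icc u v) := lt_of_lt_of_le hc₀ hsm
      set dd := diam (γ '' Icc u v) with hdddef
      have hcpos : 0 < δ' / 2 * dd := by positivity
      have hcle : δ' / 2 * dd ≤ dd := by nlinarith
      obtain ⟨M, t, hM, ht0, htM, htinc, htp⟩ := greedy hcont hcpos u v hu0 huv hv1 hcle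
      have htp' : ∀ i < M, δ' / 2 * dd ≤ diam (γ '' Icc (t i) (t (i + 1))) ∧
          diam (γ '' Icc (t i) (t (i + 1))) ≤ δ' * dd := by
        intro i hi
        obtain ⟨ha, hb⟩ := htp i hi
        exact ⟨ha, by linarith⟩
      have hMB : (M : ℝ) < B := hA u v M t hu0 huv hv1 hM ht0 htM htinc htp'
      -- piece diameters small enough for recursion
      have hpieceSmall : ∀ i < M, diam (γ '' Icc (t i) (t (i + 1))) < c₀ / δ' ^ r := by
        intro i hi
        have hb := (htp' i hi).2
        have h2 : dd < c₀ / δ' ^ (r + 1) := hdd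
        have hpow : (0:ℝ) < δ' ^ r := pow_pos hδ'0 r
        have : δ' * dd < δ' * (c₀ / δ' ^ (r + 1)) := by
          exact mul_lt_mul_of_pos_left h2 hδ'0
        have e : δ' * (c₀ / δ' ^ (r + 1)) = c₀ / δ' ^ r := by
          rw [pow_succ]
          field_simp
        linarith [hb, this, e ▸ this]
      have hbound : ∀ i ≤ M, 0 ≤ t i ∧ t i ≤ 1 := by
        intro i hi
        constructor
        · have := mono_t htinc i hi 0 (by omega)
          rw [ht0] at this; linarith
        · have := mono_t htinc M le_rfl i hi
          rw [htM] at this; linarith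
      -- inner concatenation induction
      have inner : ∀ m : ℕ, 0 < m → m ≤ M →
          ∃ (J : ℕ) (w : ℕ → ℝ), 0 < J ∧ w 0 = t 0 ∧ w J = t m ∧
            (∀ j < J, w j < w (j + 1)) ∧
            (∀ j < J, diam (γ '' Icc (w j) (w (j + 1))) < c₀) ∧ (J : ℝ) ≤ m * B ^ r := by
        intro m
        induction m with
        | zero => omega
        | succ m ihm =>
          intro _ hmM
          rcases Nat.eq_zero_or_pos m with rfl | hm0
          · obtain ⟨J, w, hJ, hw0, hwJ, hwinc, hwp, hJB⟩ :=
              ih (t 0) (t 1) (hbound 0 (by omega)).1 (htinc 0 (by omega))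
                (hbound 1 (by omega)).2 (hpieceSmall 0 (by omega))
            exact ⟨J, w, hJ, hw0, hwJ, hwinc, hwp, by push_cast; linarith⟩
          · obtain ⟨J₁, w₁, hJ₁, hw₁0, hw₁J, hw₁inc, hw₁p, hJ₁B⟩ := ihm hm0 (by omega)
            obtain ⟨J₂, w₂, hJ₂, hw₂0, hw₂J, hw₂inc, hw₂p, hJ₂B⟩ :=
              ih (t m) (t (m + 1)) (hbound m (by omega)).1 (htinc m (by omega))
                (hbound (m + 1) (by omega)).2 (hpieceSmall m (by omega))
            obtain ⟨w, hw0, hwJ, hwinc, hwp⟩ :=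
              append (P := fun x y => diam (γ '' Icc x y) < c₀) hJ₁ hJ₂ hw₁0 hw₁J hw₂0 hw₂J
                hw₁inc hw₂inc hw₁p hw₂p
            refine ⟨J₁ + J₂, w, by omega, hw0, hwJ, hwinc, hwp, ?_⟩
            push_cast
            push_cast at hJ₁B hJ₂B
            nlinarith
      obtain ⟨J, w, hJ, hw0, hwJ, hwinc, hwp, hJB⟩ := inner M hM le_rfl
      refine ⟨J, w, hJ, by rw [hw0, ht0], by rw [hwJ, htM], hwinc, hwp, ?_⟩
      have hBr : (0:ℝ) ≤ B ^ r := by positivity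
      have : (M : ℝ) * B ^ r ≤ B * B ^ r := mul_le_mul_of_nonneg_right hMB.le hBr
      rw [pow_succ]
      nlinarith

lemma count (hcont : ContinuousOn γ (Icc 0 1)) {c₀ : ℝ} {M₀ J : ℕ} {u w : ℕ → ℝ}
    (hM₀ : 0 < M₀) (hJ : 0 < J)
    (hu0 : u 0 = 0) (huM : u M₀ = 1) (huinc : ∀ i < M₀, u i < u (i + 1))
    (hup : ∀ i < M₀, c₀ ≤ diam (γ '' Icc (u i) (u (i + 1))))
    (hw0 : w 0 = 0) (hwJ : w J = 1) (hwinc : ∀ j < J, w j < w (j + 1))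
    (hwp : ∀ j < J, diam (γ '' Icc (w j) (w (j + 1))) < c₀) :
    M₀ ≤ 2 * J := by
  classical
  set g : ℕ → ℕ := fun i => Nat.findGreatest (fun j => w j ≤ u i) (J - 1) with hg
  have hgle : ∀ i, g i ≤ J - 1 := fun i => Nat.findGreatest_le _
  have hg1 : ∀ i, i < M₀ → w (g i) ≤ u i := by
    intro i hi
    refine Nat.findGreatest_spec (P := fun j => w j ≤ u i) (Nat.zero_le _) ?_
    show w 0 ≤ u i
    rw [hw0, ← hu0]
    exact mono_t huinc i hi.le 0 (Nat.zero_le _)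
  have hg2 : ∀ i, i < M₀ → u i < w (g i + 1) := by
    intro i hi
    by_cases hcase : g i + 1 ≤ J - 1
    · have h' := Nat.findGreatest_is_greatest (P := fun j => w j ≤ u i) (n := J - 1)
        (Nat.lt_succ_self _) hcase
      exact not_le.1 h'
    · have hje : g i + 1 = J := by have := hgle i; omega
      rw [hje, hwJ, ← huM]
      calc u i < u (i + 1) := huinc i hi
        _ ≤ u M₀ := mono_t huinc M₀ le_rfl (i + 1) hi
  have key : ∀ i₁ i₂ i₃, i₁ < i₂ → i₂ < i₃ → i₃ < M₀ →
      g i₁ = g i₂ → g i₂ = g i₃ → False := by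
    intro i₁ i₂ i₃ h12 h23 h3M e12 e23
    set j := g i₂ with hj
    have hjJ : j < J := by have := hgle i₂; omega
    have hA1 : w j ≤ u i₂ := hg1 i₂ (by omega)
    have hA3 : u i₃ < w (j + 1) := by rw [e23]; exact hg2 i₃ h3M
    have hA2 : u (i₂ + 1) ≤ u i₃ := mono_t huinc i₃ h3M.le (i₂ + 1) (by omega)
    have hwj0 : 0 ≤ w j := by rw [← hw0]; exact mono_t hwinc j hjJ.le 0 (Nat.zero_le _)
    have hwj1 : w (j + 1) ≤ 1 := by rw [← hwJ]; exact mono_t hwinc J le_rfl (j + 1) hjJ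
    have hsub : diam (γ '' Icc (u i₂) (u (i₂ + 1))) ≤ diam (γ '' Icc (w j) (w (j + 1))) :=
      dmono hcont hwj0 hwj1 hA1 (le_trans hA2 hA3.le)
    have := hup i₂ (by omega)
    have := hwp j hjJ
    linarith
  have hfib : ∀ a ∈ Finset.image g (Finset.range M₀),
      (Finset.filter (fun i => g i = a) (Finset.range M₀)).card ≤ 2 := by
    intro a _
    by_contra hcon
    push_neg at hcon
    obtain ⟨x, y, z, hx, hy, hz, hxy, hxz, hyz⟩ := Finset.two_lt_card_iff.1 hcon
    simp only [Finset.mem_filter, Finset.mem_range] at hx hy hz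
    have exy : g x = g y := by rw [hx.2, hy.2]
    have eyz : g y = g z := by rw [hy.2, hz.2]
    have exz : g x = g z := by rw [hx.2, hz.2]
    rcases lt_trichotomy x y with h1 | h1 | h1
    · rcases lt_trichotomy y z with h2 | h2 | h2
      · exact key x y z h1 h2 hz.1 exy eyz
      · exact hyz h2
      · rcases lt_trichotomy x z with h3 | h3 | h3
        · exact key x z y h3 h2 hy.1 exz eyz.symm
        · exact hxz h3
        · exact key z x y h3 h1 hy.1 exz.symm exy
    · exact hxy h1
    · rcases lt_trichotomy x z with h2 | h2 | h2
      · exact key y x z h1 h2 hz.1 exy.symm exz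
      · exact hxz h2
      · rcases lt_trichotomy y z with h3 | h3 | h3
        · exact key y z x h3 h2 hx.1 eyz exz.symm
        · exact hyz h3
        · exact key z y x h3 h1 hx.1 eyz.symm exy.symm
  have hcard := Finset.card_le_mul_card_image (Finset.range M₀) 2 hfib
  rw [Finset.card_range] at hcard
  have himg : (Finset.image g (Finset.range M₀)).card ≤ J := by
    have hsub : Finset.image g (Finset.range M₀) ⊆ Finset.range J := by
      intro a ha
      simp only [Finset.mem_image, Finset.mem_range] at ha ⊢
      obtain ⟨i, _, rfl⟩ := ha
      have := hgle i
      omega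
    calc (Finset.image g (Finset.range M₀)).card ≤ (Finset.range J).card :=
          Finset.card_le_card hsub
      _ = J := Finset.card_range J
  omega


end JPartAux

set_option maxHeartbeats 1000000

/-- Let `Γ` be a Jordan arc, `0 < δ < δ' < 1` and `N > 1`. If every
`δ`-partition of `Γ` has at least `N` elements, then there is a subarc `Γ' ⊆ Γ` and a
`δ'`-partition `P'` of `Γ'` with `|P'| ≥ N^((log δ' + 1)/log(δδ'/2))`. -/
theorem subarc_with_large_partition
    (γ : ℝ → EuclideanSpace ℝ (Fin 2))
    (hcont : ContinuousOn γ (Set.Icc 0 1))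
    (hinj : Set.InjOn γ (Set.Icc 0 1))
    (δ δ' : ℝ) (hδ : 0 < δ) (hδδ' : δ < δ') (hδ' : δ' < 1)
    (N : ℝ) (hN : 1 < N)
    (hbig : ∀ (M : ℕ) (t : ℕ → ℝ), 0 < M → t 0 = 0 → t M = 1 →
      (∀ i < M, t i < t (i + 1)) →
      (∀ i < M,
        δ / 2 * diam (γ '' Set.Icc 0 1) ≤ diam (γ '' Set.Icc (t i) (t (i + 1))) ∧
        diam (γ '' Set.Icc (t i) (t (i + 1))) ≤ δ * diam (γ '' Set.Icc 0 1)) →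
      N ≤ (M : ℝ)) :
    ∃ a b : ℝ, 0 ≤ a ∧ a < b ∧ b ≤ 1 ∧
      ∃ (M : ℕ) (t : ℕ → ℝ), 0 < M ∧ t 0 = a ∧ t M = b ∧
        (∀ i < M, t i < t (i + 1)) ∧
        (∀ i < M,
          δ' / 2 * diam (γ '' Set.Icc a b) ≤ diam (γ '' Set.Icc (t i) (t (i + 1))) ∧
          diam (γ '' Set.Icc (t i) (t (i + 1))) ≤ δ' * diam (γ '' Set.Icc a b)) ∧
        N ^ ((Real.log δ' + 1) / Real.log (δ * δ' / 2)) ≤ (M : ℝ) := by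
  classical
  have hδ'0 : 0 < δ' := lt_trans hδ hδδ'
  have hδ1 : δ < 1 := lt_trans hδδ' hδ'
  set D := diam (γ '' Set.Icc (0:ℝ) 1) with hDdef
  have hD0 : 0 < D := by
    have h01 : (0:ℝ) ∈ Set.Icc (0:ℝ) 1 := by norm_num
    have h11 : (1:ℝ) ∈ Set.Icc (0:ℝ) 1 := by norm_num
    have hne : γ 0 ≠ γ 1 := fun h => (by norm_num : (0:ℝ) ≠ 1) (hinj h01 h11 h)
    have hdd : dist (γ 0) (γ 1) ≤ D :=
      Metric.dist_le_diam_of_mem (JPartAux.bd hcont le_rfl le_rfl)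
        (Set.mem_image_of_mem _ h01) (Set.mem_image_of_mem _ h11)
    have := dist_pos.2 hne
    linarith
  set e := (Real.log δ' + 1) / Real.log (δ * δ' / 2) with hedef
  set B := N ^ e with hBdef
  -- greedy δ'-partition of the whole arc
  have hc'pos : 0 < δ' / 2 * D := by positivity
  have hc'le : δ' / 2 * D ≤ D := by
    have h1 : δ' / 2 * D ≤ 1 * D := mul_le_mul_of_nonneg_right (by linarith) hD0.le
    linarith [h1, one_mul D]
  obtain ⟨M₁, t₁, hM₁, ht₁0, ht₁M, ht₁inc, ht₁p⟩ :=
    JPartAux.greedy hcont hc'pos 0 1 le_rfl one_pos le_rfl hc'le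
  have ht₁p' : ∀ i < M₁, δ' / 2 * D ≤ diam (γ '' Set.Icc (t₁ i) (t₁ (i + 1))) ∧
      diam (γ '' Set.Icc (t₁ i) (t₁ (i + 1))) ≤ δ' * D := by
    intro i hi
    exact ⟨(ht₁p i hi).1, by linarith [(ht₁p i hi).2]⟩
  rcases le_or_gt B (M₁ : ℝ) with hcase | hcase
  · exact ⟨0, 1, le_rfl, one_pos, le_rfl, M₁, t₁, hM₁, ht₁0, ht₁M, ht₁inc, ht₁p', hcase⟩
  · by_contra hcon
    push_neg at hcon
    have hA : ∀ (u v : ℝ) (M : ℕ) (t : ℕ → ℝ), 0 ≤ u → u < v → v ≤ 1 → 0 < M →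
        t 0 = u → t M = v → (∀ i < M, t i < t (i + 1)) →
        (∀ i < M, δ' / 2 * diam (γ '' Set.Icc u v) ≤ diam (γ '' Set.Icc (t i) (t (i + 1))) ∧
          diam (γ '' Set.Icc (t i) (t (i + 1))) ≤ δ' * diam (γ '' Set.Icc u v)) →
        (M : ℝ) < B :=
      fun u v M t h1 h2 h3 h4 h5 h6 h7 h8 => hcon u v h1 h2 h3 M t h4 h5 h6 h7 h8
    -- chain bound : 1/δ' ≤ M₁ < B
    have hsum := JPartAux.sum_diam hcont M₁ t₁ hM₁ ht₁inc
    rw [ht₁0, ht₁M] at hsum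
    have hsum2 : ∑ i ∈ Finset.range M₁, diam (γ '' Set.Icc (t₁ i) (t₁ (i + 1)))
        ≤ (M₁ : ℝ) * (δ' * D) := by
      have := Finset.sum_le_card_nsmul (Finset.range M₁) _ (δ' * D)
        (fun i hi => (ht₁p' i (Finset.mem_range.1 hi)).2)
      simpa [nsmul_eq_mul] using this
    have hchain : 1 / δ' ≤ (M₁ : ℝ) := by
      have h1 : 1 ≤ (M₁ : ℝ) * δ' := by
        by_contra hcc
        push_neg at hcc
        have h2 : ((M₁ : ℝ) * δ') * D < 1 * D := mul_lt_mul_of_pos_right hcc hD0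
        rw [one_mul, mul_assoc] at h2
        linarith
      rw [div_le_iff₀ hδ'0]
      linarith
    have h1B : 1 / δ' < B := lt_of_le_of_lt hchain hcase
    have h1δ' : 1 < 1 / δ' := by rw [lt_div_iff₀ hδ'0]; linarith
    have hB1 : 1 < B := lt_trans h1δ' h1B
    -- logarithmic quantities
    have hN0 : (0:ℝ) < N := by linarith
    have hLN : 0 < Real.log N := Real.log_pos hN
    have hlogB : Real.log B = e * Real.log N := Real.log_rpow hN0 e
    set p := -Real.log δ' with hpdef
    have hp0 : 0 < p := by
      have := Real.log_neg hδ'0 hδ'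
      rw [hpdef]; linarith
    have hstar : p < e * Real.log N := by
      have hll := Real.log_lt_log (by positivity) h1B
      rw [hlogB] at hll
      rw [one_div, Real.log_inv] at hll
      rw [hpdef]; linarith
    have he0 : 0 < e := by
      by_contra h
      push_neg at h
      have : e * Real.log N ≤ 0 := mul_nonpos_iff.2 (Or.inr ⟨h, hLN.le⟩)
      linarith
    have hden : Real.log (δ * δ' / 2) < 0 := by
      have hdd1 : δ * δ' ≤ δ * 1 := mul_le_mul_of_nonneg_left hδ'.le hδ.le
      rw [mul_one] at hdd1
      exact Real.log_neg (by positivity) (by linarith)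
    have hnum : Real.log δ' + 1 < 0 := by
      by_contra h
      push_neg at h
      have : e ≤ 0 := by
        rw [hedef]
        exact div_nonpos_iff.mpr (Or.inl ⟨h, hden.le⟩)
      linarith
    have hp1 : 1 < p := by rw [hpdef]; linarith
    set x := -Real.log δ with hxdef
    have hx0 : 0 < x := by
      have := Real.log_neg hδ hδ1
      rw [hxdef]; linarith
    have hlog2pos : 0 < Real.log 2 := Real.log_pos (by norm_num)
    have hlog2lt : Real.log 2 < 1 := by have := Real.log_two_lt_d9; linarith
    set S := x + p + Real.log 2 with hSdef
    have hS0 : 0 < S := by rw [hSdef]; linarith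
    have hSval : Real.log (δ * δ' / 2) = -S := by
      rw [Real.log_div (by positivity) (by norm_num),
        Real.log_mul (ne_of_gt hδ) (ne_of_gt hδ'0), hSdef, hxdef, hpdef]
      ring
    have heval : e = (p - 1) / S := by
      rw [hedef, hSval, show Real.log δ' = -p by rw [hpdef]; ring]
      rw [show (-p + 1 : ℝ) = -(p - 1) by ring, neg_div_neg_eq]
    -- the number of levels
    have hex : ∃ k : ℕ, δ' ^ k < δ / 2 := exists_pow_lt_of_lt_one (by positivity) hδ'
    set K := Nat.find hex with hKdef
    have hKspec : δ' ^ K < δ / 2 := Nat.find_spec hex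
    have hK0 : 0 < K := by
      rcases Nat.eq_zero_or_pos K with h | h
      · exfalso
        have := hKspec
        rw [h, pow_zero] at this
        linarith
      · exact h
    have hKmin : ¬ δ' ^ (K - 1) < δ / 2 := Nat.find_min hex (by omega)
    push_neg at hKmin
    have hKp : (K : ℝ) * p ≤ S := by
      have hlog : Real.log (δ / 2) ≤ Real.log (δ' ^ (K - 1)) :=
        Real.log_le_log (by positivity) hKmin
      rw [Real.log_pow, Real.log_div (ne_of_gt hδ) (by norm_num)] at hlog
      have hcast : ((K - 1 : ℕ) : ℝ) = (K : ℝ) - 1 := by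
        rw [Nat.cast_sub hK0]; norm_num
      rw [hcast, show Real.log δ = -x by rw [hxdef]; ring,
        show Real.log δ' = -p by rw [hpdef]; ring] at hlog
      have hexp : ((K : ℝ) - 1) * (-p) = -((K : ℝ) * p) + p := by ring
      rw [hexp] at hlog
      rw [hSdef]
      linarith
    -- key arithmetic
    have hplog2 : p * Real.log 2 < Real.log N := by
      have h1 : p * S < (p - 1) * Real.log N := by
        have hst := hstar
        rw [heval] at hst
        have hT : (p - 1) / S * Real.log N = ((p - 1) * Real.log N) / S := by ring
        rw [hT] at hst
        exact (lt_div_iff₀ hS0).1 hst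
      have h3 : (p - 1) * Real.log 2 < p := by
        have hh : 0 < (p - 1) * (1 - Real.log 2) := by
          apply mul_pos <;> linarith
        nlinarith
      have h4 : (p - 1) * Real.log 2 < S := by rw [hSdef]; linarith
      have h5 : p * ((p - 1) * Real.log 2) < p * S := (mul_lt_mul_iff_right₀ hp0).2 h4
      have h6 : p * ((p - 1) * Real.log 2) < (p - 1) * Real.log N := h5.trans h1
      have h6' : (p - 1) * (p * Real.log 2) < (p - 1) * Real.log N := by
        have e1 : p * ((p - 1) * Real.log 2) = (p - 1) * (p * Real.log 2) := by ring
        linarith [e1 ▸ h6]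
      exact (mul_lt_mul_iff_right₀ (by linarith : (0:ℝ) < p - 1)).1 h6'
    have hKey : Real.log 2 + (K : ℝ) * Real.log B < Real.log N := by
      have hKS : (K : ℝ) ≤ S / p := by rw [le_div_iff₀ hp0]; linarith
      have hlogB0 : 0 ≤ Real.log B := by rw [hlogB]; positivity
      have h5 : (K : ℝ) * Real.log B ≤ (S / p) * Real.log B :=
        mul_le_mul_of_nonneg_right hKS hlogB0
      have h6 : (S / p) * Real.log B = (p - 1) * Real.log N / p := by
        rw [hlogB, heval]
        field_simp
      have h7 : Real.log 2 < Real.log N / p := by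
        rw [lt_div_iff₀ hp0, mul_comm]
        exact hplog2
      have h8 : (p - 1) * Real.log N / p = Real.log N - Real.log N / p := by
        field_simp
      calc Real.log 2 + (K : ℝ) * Real.log B ≤ Real.log 2 + (p - 1) * Real.log N / p := by
            rw [← h6]; linarith
        _ = Real.log 2 + Real.log N - Real.log N / p := by rw [h8]; ring
        _ < Real.log N := by linarith
    have hB0 : (0:ℝ) < B := Real.rpow_pos_of_pos hN0 e
    have h2BK : 2 * B ^ K < N := by
      have hBK0 : (0:ℝ) < B ^ K := pow_pos hB0 K
      have hlogid : Real.log (2 * B ^ K) = Real.log 2 + (K : ℝ) * Real.log B := by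
        rw [Real.log_mul (by norm_num) (ne_of_gt hBK0), Real.log_pow]
      have h9 : Real.log (2 * B ^ K) < Real.log N := by rw [hlogid]; exact hKey
      exact (Real.log_lt_log_iff (by positivity) hN0).1 h9
    -- δ-partition of the whole arc
    have hcpos : 0 < δ / 2 * D := by positivity
    have hcle : δ / 2 * D ≤ D := by
      have h1 : δ / 2 * D ≤ 1 * D := mul_le_mul_of_nonneg_right (by linarith) hD0.le
      linarith [h1, one_mul D]
    obtain ⟨M₀, t₀, hM₀, ht₀0, ht₀M, ht₀inc, ht₀p⟩ :=
      JPartAux.greedy hcont hcpos 0 1 le_rfl one_pos le_rfl hcle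
    have hNM₀ : N ≤ (M₀ : ℝ) := by
      refine hbig M₀ t₀ hM₀ ht₀0 ht₀M ht₀inc ?_
      intro i hi
      exact ⟨(ht₀p i hi).1, by linarith [(ht₀p i hi).2]⟩
    -- fine cover via iterated δ'-partitions
    have hDlt : D < (δ / 2 * D) / δ' ^ K := by
      rw [lt_div_iff₀ (pow_pos hδ'0 K)]
      calc D * δ' ^ K < D * (δ / 2) := mul_lt_mul_of_pos_left hKspec hD0
        _ = δ / 2 * D := by ring
    obtain ⟨J, w, hJ, hw0, hwJ, hwinc, hwp, hJB⟩ :=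
      JPartAux.cover hcont hδ'0 hδ' hcpos hB1.le hA K 0 1 le_rfl one_pos le_rfl hDlt
    have hcount : M₀ ≤ 2 * J :=
      JPartAux.count hcont hM₀ hJ ht₀0 ht₀M ht₀inc (fun i hi => (ht₀p i hi).1)
        hw0 hwJ hwinc hwp
    have hc1 : (M₀ : ℝ) ≤ 2 * (J : ℝ) := by exact_mod_cast hcount
    have hc2 : (M₀ : ℝ) ≤ 2 * B ^ K := by linarith
    linarith
end

section
/- If Γ is a rectifiable Jordan curve in ℝ² such that ℓ(γ(x,y)) ≤ C|x−y| for all x,y ∈ Γ (where γ(x,y) is the subarc of smaller diameter), then Γ satisfies the weak chord-arc property: there exists M₀ > 0 such that every subarc Γ' ⊂ Γ with diam(Γ') < 1 admits a diam(Γ')-partition P with M(Γ',P) ≤ M₀. -/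
open Metric Set
section Helpers
variable {γ : ℝ → EuclideanSpace ℝ (Fin 2)}

lemma wca_bdd (hcont : ContinuousOn γ (Set.Icc 0 1)) {s t : ℝ} (h0 : 0 ≤ s) (h1 : t ≤ 1) :
    Bornology.IsBounded (γ '' Icc s t) := by
  have : IsCompact (γ '' Icc s t) := by
    apply IsCompact.image_of_continuousOn isCompact_Icc
    exact hcont.mono (Icc_subset_Icc h0 h1)
  exact this.isBounded

lemma wca_mono (hcont : ContinuousOn γ (Set.Icc 0 1)) {s t s' t' : ℝ} (h0 : 0 ≤ s') (h1 : t' ≤ 1)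
    (hs : s' ≤ s) (ht : t ≤ t') :
    diam (γ '' Icc s t) ≤ diam (γ '' Icc s' t') :=
  diam_mono (image_mono (Icc_subset_Icc hs ht)) (wca_bdd hcont h0 h1)

lemma wca_tri (hcont : ContinuousOn γ (Set.Icc 0 1)) {s t u : ℝ} (hst : s ≤ t) (htu : t ≤ u) :
    diam (γ '' Icc s u) ≤ diam (γ '' Icc s t) + diam (γ '' Icc t u) := by
  have h1 : Icc s u = Icc s t ∪ Icc t u := (Icc_union_Icc_eq_Icc hst htu).symm
  have h2 : γ '' Icc s u = (γ '' Icc s t) ∪ (γ '' Icc t u) := by rw [h1, image_union]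
  rw [h2]
  have := diam_union (x := γ t) (y := γ t) (s := γ '' Icc s t) (t := γ '' Icc t u)
    (mem_image_of_mem _ (right_mem_Icc.2 hst)) (mem_image_of_mem _ (left_mem_Icc.2 htu))
  simpa using this

lemma wca_diam_le_var (hcont : ContinuousOn γ (Set.Icc 0 1))
    (hrect : eVariationOn γ (Set.Icc 0 1) ≠ ⊤) {s t : ℝ} (h0 : 0 ≤ s) (h1 : t ≤ 1) :
    diam (γ '' Icc s t) ≤ (eVariationOn γ (Icc s t)).toReal := by
  have hfin : eVariationOn γ (Icc s t) ≠ ⊤ :=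
    fun h => hrect (top_le_iff.1 (h ▸ eVariationOn.mono γ (Icc_subset_Icc h0 h1)))
  apply diam_le_of_forall_dist_le ENNReal.toReal_nonneg
  rintro x ⟨u, hu, rfl⟩ y ⟨v, hv, rfl⟩
  have := eVariationOn.edist_le γ hu hv
  rw [edist_dist] at this
  calc dist (γ u) (γ v) = (ENNReal.ofReal (dist (γ u) (γ v))).toReal := by
        rw [ENNReal.toReal_ofReal dist_nonneg]
    _ ≤ (eVariationOn γ (Icc s t)).toReal := ENNReal.toReal_mono hfin this

lemma wca_small_diam (hcont : ContinuousOn γ (Set.Icc 0 1)) :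
    ∀ ε > (0:ℝ), ∃ δ > (0:ℝ), ∀ s t : ℝ, 0 ≤ s → s ≤ t → t ≤ 1 → t - s < δ →
      diam (γ '' Icc s t) ≤ ε := by
  intro ε hε
  have huc := isCompact_Icc.uniformContinuousOn_of_continuous hcont
  rw [Metric.uniformContinuousOn_iff] at huc
  obtain ⟨δ, hδ, hδ'⟩ := huc ε hε
  refine ⟨δ, hδ, fun s t h0 hst h1 hlt => ?_⟩
  apply diam_le_of_forall_dist_le hε.le
  rintro x ⟨u, hu, rfl⟩ y ⟨v, hv, rfl⟩
  have hu' : u ∈ Icc (0:ℝ) 1 := ⟨h0.trans hu.1, hu.2.trans h1⟩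
  have hv' : v ∈ Icc (0:ℝ) 1 := ⟨h0.trans hv.1, hv.2.trans h1⟩
  have : dist u v < δ := by
    rw [Real.dist_eq]
    have h1 := hu.1; have h2 := hu.2; have h3 := hv.1; have h4 := hv.2
    rw [abs_sub_lt_iff]
    constructor <;> linarith
  exact (hδ' u hu' v hv' this).le

end Helpers

section Cont
variable {γ : ℝ → EuclideanSpace ℝ (Fin 2)}

lemma wca_cont_left (hcont : ContinuousOn γ (Set.Icc 0 1)) {s e : ℝ} (h0 : 0 ≤ s) (h1 : e ≤ 1) :
    ContinuousOn (fun t => diam (γ '' Icc s t)) (Icc s e) := by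
  rw [Metric.continuousOn_iff]
  intro t ht ε hε
  obtain ⟨δ, hδ, hδ'⟩ := wca_small_diam hcont (ε/2) (by linarith)
  refine ⟨δ, hδ, fun t' ht' hd => ?_⟩
  rw [Real.dist_eq] at hd ⊢
  rcases le_total t' t with hc | hc
  · have key : diam (γ '' Icc s t) ≤ diam (γ '' Icc s t') + diam (γ '' Icc t' t) :=
      wca_tri hcont ht'.1 hc
    have hsm : diam (γ '' Icc t' t) ≤ ε/2 := by
      apply hδ' t' t (h0.trans ht'.1) hc (ht.2.trans h1)
      rw [abs_sub_lt_iff] at hd; linarith [hd.2]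
    have hmono : diam (γ '' Icc s t') ≤ diam (γ '' Icc s t) :=
      wca_mono hcont h0 (ht.2.trans h1) le_rfl hc
    rw [abs_sub_lt_iff]; constructor <;> linarith
  · have key : diam (γ '' Icc s t') ≤ diam (γ '' Icc s t) + diam (γ '' Icc t t') :=
      wca_tri hcont ht.1 hc
    have hsm : diam (γ '' Icc t t') ≤ ε/2 := by
      apply hδ' t t' (h0.trans ht.1) hc (ht'.2.trans h1)
      rw [abs_sub_lt_iff] at hd; linarith [hd.1]
    have hmono : diam (γ '' Icc s t) ≤ diam (γ '' Icc s t') :=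
      wca_mono hcont h0 (ht'.2.trans h1) le_rfl hc
    rw [abs_sub_lt_iff]; constructor <;> linarith

lemma wca_cont_right (hcont : ContinuousOn γ (Set.Icc 0 1)) {s e : ℝ} (h0 : 0 ≤ s) (h1 : e ≤ 1) :
    ContinuousOn (fun t => diam (γ '' Icc t e)) (Icc s e) := by
  rw [Metric.continuousOn_iff]
  intro t ht ε hε
  obtain ⟨δ, hδ, hδ'⟩ := wca_small_diam hcont (ε/2) (by linarith)
  refine ⟨δ, hδ, fun t' ht' hd => ?_⟩
  rw [Real.dist_eq] at hd ⊢
  rcases le_total t' t with hc | hc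
  · have key : diam (γ '' Icc t' e) ≤ diam (γ '' Icc t' t) + diam (γ '' Icc t e) :=
      wca_tri hcont hc ht.2
    have hsm : diam (γ '' Icc t' t) ≤ ε/2 := by
      apply hδ' t' t (h0.trans ht'.1) hc (ht.2.trans h1)
      rw [abs_sub_lt_iff] at hd; linarith [hd.2]
    have hmono : diam (γ '' Icc t e) ≤ diam (γ '' Icc t' e) :=
      wca_mono hcont (h0.trans ht'.1) h1 hc le_rfl
    rw [abs_sub_lt_iff]; constructor <;> linarith
  · have key : diam (γ '' Icc t e) ≤ diam (γ '' Icc t t') + diam (γ '' Icc t' e) :=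
      wca_tri hcont hc ht'.2
    have hsm : diam (γ '' Icc t t') ≤ ε/2 := by
      apply hδ' t t' (h0.trans ht.1) hc (ht'.2.trans h1)
      rw [abs_sub_lt_iff] at hd; linarith [hd.1]
    have hmono : diam (γ '' Icc t' e) ≤ diam (γ '' Icc t e) :=
      wca_mono hcont (h0.trans ht.1) h1 hc le_rfl
    rw [abs_sub_lt_iff]; constructor <;> linarith

end Cont

section VarBound
variable {γ : ℝ → EuclideanSpace ℝ (Fin 2)}

lemma wca_var_bound (hcont : ContinuousOn γ (Set.Icc 0 1))
    (C : ℝ) (hC : 0 < C)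
    (hCA : ∀ a b : ℝ, 0 ≤ a → a ≤ b → b ≤ 1 →
      (diam (γ '' Set.Icc a b) ≤ diam (γ '' (Set.Icc 0 a ∪ Set.Icc b 1)) →
        eVariationOn γ (Set.Icc a b) ≤ ENNReal.ofReal (C * dist (γ a) (γ b))) ∧
      (diam (γ '' (Set.Icc 0 a ∪ Set.Icc b 1)) ≤ diam (γ '' Set.Icc a b) →
        eVariationOn γ (Set.Icc 0 a) + eVariationOn γ (Set.Icc b 1) ≤
          ENNReal.ofReal (C * dist (γ a) (γ b))))
    {a b : ℝ} (ha : 0 ≤ a) (hab : a ≤ b) (hb : b ≤ 1) :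
    eVariationOn γ (Icc a b) ≤ ENNReal.ofReal (2 * C * diam (γ '' Icc a b)) := by
  set D := diam (γ '' Icc a b) with hD
  have hD0 : 0 ≤ D := diam_nonneg
  -- balance point m
  have hh : ContinuousOn (fun t => diam (γ '' Icc a t) - diam (γ '' Icc t b)) (Icc a b) :=
    (wca_cont_left hcont ha hb).sub (wca_cont_right hcont ha hb)
  have h0mem : (0:ℝ) ∈ Icc (diam (γ '' Icc a a) - diam (γ '' Icc a b))
      (diam (γ '' Icc a b) - diam (γ '' Icc b b)) := by
    rw [Icc_self, Icc_self]
    have e1 : γ '' {a} = {γ a} := image_singleton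
    have e2 : γ '' {b} = {γ b} := image_singleton
    rw [e1, e2, diam_singleton, diam_singleton]
    constructor <;> simp <;> linarith
  obtain ⟨m, hm, hmeq⟩ := intermediate_value_Icc hab hh h0mem
  have hd : diam (γ '' Icc a m) = diam (γ '' Icc m b) := by
    have := hmeq; dsimp at this; linarith
  have hd0 : 0 ≤ diam (γ '' Icc a m) := diam_nonneg
  have hdD : diam (γ '' Icc a m) ≤ D := wca_mono hcont ha hb le_rfl hm.2
  have hm1 : m ≤ 1 := hm.2.trans hb
  have h0m : 0 ≤ m := ha.trans hm.1
  have bdd1 : Bornology.IsBounded (γ '' (Icc 0 a ∪ Icc m 1)) := by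
    rw [image_union]
    exact (wca_bdd hcont le_rfl (hab.trans hb)).union (wca_bdd hcont h0m le_rfl)
  have bdd2 : Bornology.IsBounded (γ '' (Icc 0 m ∪ Icc b 1)) := by
    rw [image_union]
    exact (wca_bdd hcont le_rfl hm1).union (wca_bdd hcont (ha.trans hab) le_rfl)
  have key1 : eVariationOn γ (Icc a m) ≤ ENNReal.ofReal (C * diam (γ '' Icc a m)) := by
    have hyp : diam (γ '' Icc a m) ≤ diam (γ '' (Icc 0 a ∪ Icc m 1)) := by
      rw [hd]
      exact diam_mono (image_mono ((Icc_subset_Icc le_rfl hb).trans subset_union_right)) bdd1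
    have h2 := (hCA a m ha hm.1 hm1).1 hyp
    refine h2.trans (ENNReal.ofReal_le_ofReal ?_)
    have h3 : dist (γ a) (γ m) ≤ diam (γ '' Icc a m) :=
      dist_le_diam_of_mem (wca_bdd hcont ha hm1)
        (mem_image_of_mem _ (left_mem_Icc.2 hm.1)) (mem_image_of_mem _ (right_mem_Icc.2 hm.1))
    nlinarith
  have key2 : eVariationOn γ (Icc m b) ≤ ENNReal.ofReal (C * diam (γ '' Icc a m)) := by
    have hyp : diam (γ '' Icc m b) ≤ diam (γ '' (Icc 0 m ∪ Icc b 1)) := by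
      rw [← hd]
      exact diam_mono (image_mono ((Icc_subset_Icc ha le_rfl).trans subset_union_left)) bdd2
    have h2 := (hCA m b h0m hm.2 hb).1 hyp
    refine h2.trans (ENNReal.ofReal_le_ofReal ?_)
    have h3 : dist (γ m) (γ b) ≤ diam (γ '' Icc m b) :=
      dist_le_diam_of_mem (wca_bdd hcont h0m hb)
        (mem_image_of_mem _ (left_mem_Icc.2 hm.2)) (mem_image_of_mem _ (right_mem_Icc.2 hm.2))
    rw [hd]; nlinarith [hd ▸ h3]
  have hadd : eVariationOn γ (Icc a m) + eVariationOn γ (Icc m b) = eVariationOn γ (Icc a b) := by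
    have := eVariationOn.Icc_add_Icc γ (s := Icc a b) hm.1 hm.2 hm
    rwa [inter_eq_self_of_subset_right (Icc_subset_Icc le_rfl hm.2),
      inter_eq_self_of_subset_right (Icc_subset_Icc hm.1 le_rfl),
      inter_self] at this
  calc eVariationOn γ (Icc a b) = eVariationOn γ (Icc a m) + eVariationOn γ (Icc m b) := hadd.symm
    _ ≤ ENNReal.ofReal (C * diam (γ '' Icc a m)) + ENNReal.ofReal (C * diam (γ '' Icc a m)) :=
        add_le_add key1 key2
    _ = ENNReal.ofReal (C * diam (γ '' Icc a m) + C * diam (γ '' Icc a m)) :=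
        (ENNReal.ofReal_add (by positivity) (by positivity)).symm
    _ ≤ ENNReal.ofReal (2 * C * D) := ENNReal.ofReal_le_ofReal (by nlinarith)

end VarBound

lemma wca_le_chain (t : ℕ → ℝ) : ∀ N : ℕ, (∀ i < N, t i ≤ t (i+1)) → t 0 ≤ t N := by
  intro N
  induction N with
  | zero => intro _; exact le_refl _
  | succ n ih =>
    intro h
    exact (ih (fun i hi => h i (hi.trans (Nat.lt_succ_self n)))).trans (h n (Nat.lt_succ_self n))

lemma wca_chain (γ : ℝ → EuclideanSpace ℝ (Fin 2)) (t : ℕ → ℝ) :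
    ∀ N : ℕ, (∀ i < N, t i ≤ t (i+1)) →
      ∑ i ∈ Finset.range N, eVariationOn γ (Icc (t i) (t (i+1))) =
        eVariationOn γ (Icc (t 0) (t N)) := by
  intro N
  induction N with
  | zero =>
    intro _
    have : (Icc (t 0) (t 0)).Subsingleton := by
      rw [Icc_self]; exact subsingleton_singleton
    simp [eVariationOn.subsingleton γ this]
  | succ n ih =>
    intro hmono
    have hm' : ∀ i < n, t i ≤ t (i+1) := fun i hi => hmono i (hi.trans (Nat.lt_succ_self n))
    have h0n : t 0 ≤ t n := wca_le_chain t n hm'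
    rw [Finset.sum_range_succ, ih hm']
    have hnn : t n ≤ t (n+1) := hmono n (Nat.lt_succ_self n)
    have := eVariationOn.Icc_add_Icc γ (s := univ) h0n hnn (mem_univ (t n))
    simpa using this

/-- A chord-arc curve (rectifiable Jordan curve with `ℓ(γ(x,y)) ≤ C·|x−y|`,
where `γ(x,y)` is the subarc of smaller diameter) has the weak chord-arc property:
there is `M₀ > 0` such that every subarc `Γ'` of diameter `< 1` admits a
`diam Γ'`-partition `P` with `M(Γ',P) ≤ M₀`. The curve is parametrized by `γ` on `[0,1]`
with `γ 0 = γ 1`; length is total variation `eVariationOn`. -/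
theorem chord_arc_implies_weak_chord_arc
    (γ : ℝ → EuclideanSpace ℝ (Fin 2))
    (hcont : ContinuousOn γ (Set.Icc 0 1))
    (hinj : Set.InjOn γ (Set.Ico 0 1))
    (hclosed : γ 0 = γ 1)
    (hrect : eVariationOn γ (Set.Icc 0 1) ≠ ⊤)
    (C : ℝ) (hC : 0 < C)
    (hCA : ∀ a b : ℝ, 0 ≤ a → a ≤ b → b ≤ 1 →
      (diam (γ '' Set.Icc a b) ≤ diam (γ '' (Set.Icc 0 a ∪ Set.Icc b 1)) →
        eVariationOn γ (Set.Icc a b) ≤ ENNReal.ofReal (C * dist (γ a) (γ b))) ∧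
      (diam (γ '' (Set.Icc 0 a ∪ Set.Icc b 1)) ≤ diam (γ '' Set.Icc a b) →
        eVariationOn γ (Set.Icc 0 a) + eVariationOn γ (Set.Icc b 1) ≤
          ENNReal.ofReal (C * dist (γ a) (γ b)))) :
    ∃ M₀ : ℝ, 0 < M₀ ∧
      ∀ a b : ℝ, 0 ≤ a → a < b → b ≤ 1 → diam (γ '' Set.Icc a b) < 1 →
        ∃ (N : ℕ) (t : ℕ → ℝ), 0 < N ∧ t 0 = a ∧ t N = b ∧
          (∀ i < N, t i < t (i + 1)) ∧
          (∀ i < N,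
            diam (γ '' Set.Icc a b) / 2 * diam (γ '' Set.Icc a b) ≤
              diam (γ '' Set.Icc (t i) (t (i + 1))) ∧
            diam (γ '' Set.Icc (t i) (t (i + 1))) ≤
              diam (γ '' Set.Icc a b) * diam (γ '' Set.Icc a b)) ∧
          (∑ i ∈ Finset.range N, diam (γ '' Set.Icc (t i) (t (i + 1)))) /
              diam (γ '' Set.Icc a b) ≤ M₀ := by
  classical
  refine ⟨2 * C, by linarith, ?_⟩
  intro a b ha hab hb hDlt
  set D := diam (γ '' Set.Icc a b) with hDdef
  have hab' : a ≤ b := hab.le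
  -- D > 0
  have hD0 : 0 < D := by
    have hc1 : a < (a+b)/2 := by linarith
    have hne : γ a ≠ γ ((a+b)/2) := by
      intro h
      have := hinj ⟨ha, lt_of_lt_of_le hab hb⟩ ⟨by linarith, by linarith⟩ h
      linarith
    have hdist : 0 < dist (γ a) (γ ((a+b)/2)) := dist_pos.2 hne
    have hdd : dist (γ a) (γ ((a+b)/2)) ≤ D :=
      dist_le_diam_of_mem (wca_bdd hcont ha hb)
        (mem_image_of_mem _ (left_mem_Icc.2 hab')) (mem_image_of_mem _ ⟨by linarith, by linarith⟩)
    linarith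
  have hDD : 0 < D * D := by positivity
  have hDD2 : 0 < D * D / 2 := by positivity
  have hDDlt : D * D < D := by nlinarith
  have hfin : ∀ s t : ℝ, 0 ≤ s → t ≤ 1 → eVariationOn γ (Icc s t) ≠ ⊤ := by
    intro s t h0 h1 h
    exact hrect (top_le_iff.1 (h ▸ eVariationOn.mono γ (Icc_subset_Icc h0 h1)))
  -- greedy next-point function
  set next : ℝ → ℝ := fun s =>
    if h : (D * D < diam (γ '' Icc s b)) ∧ ∃ u, u ∈ Ioo s b ∧ diam (γ '' Icc s u) = D * D / 2
    then h.2.choose else b with hnextdef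
  set t : ℕ → ℝ := fun i => next^[i] a with htdef
  have htz : t 0 = a := rfl
  have htsucc : ∀ i, t (i+1) = next (t i) := fun i => Function.iterate_succ_apply' next i a
  have hnextb : next b = b := by
    rw [hnextdef]
    apply dif_neg
    rintro ⟨h1, -⟩
    rw [Icc_self, image_singleton, diam_singleton] at h1
    exact absurd h1 (not_lt.2 hDD.le)
  -- the step dichotomy
  have hstep : ∀ s, a ≤ s → s < b → D * D / 2 < diam (γ '' Icc s b) →
      s < next s ∧ next s ≤ b ∧
        ((next s < b ∧ diam (γ '' Icc s (next s)) = D * D / 2 ∧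
            D * D / 2 < diam (γ '' Icc (next s) b))
          ∨ (next s = b ∧ diam (γ '' Icc s b) ≤ D * D)) := by
    intro s has hsb hinvs
    by_cases hgt : D * D < diam (γ '' Icc s b)
    · have hcl : ContinuousOn (fun u => diam (γ '' Icc s u)) (Icc s b) :=
        wca_cont_left hcont (ha.trans has) hb
      have hfs : diam (γ '' Icc s s) = 0 := by rw [Icc_self, image_singleton, diam_singleton]
      have hmem : D * D / 2 ∈ Ioo (diam (γ '' Icc s s)) (diam (γ '' Icc s b)) := by
        rw [hfs]; exact ⟨hDD2, by linarith⟩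
      obtain ⟨u, hu, huq⟩ := intermediate_value_Ioo hsb.le hcl hmem
      have hcond : (D * D < diam (γ '' Icc s b)) ∧
          ∃ u, u ∈ Ioo s b ∧ diam (γ '' Icc s u) = D * D / 2 := ⟨hgt, ⟨u, hu, huq⟩⟩
      have hval : next s = hcond.2.choose := by rw [hnextdef]; exact dif_pos hcond
      obtain ⟨hu1, hu2⟩ := hcond.2.choose_spec
      rw [← hval] at hu1 hu2
      refine ⟨hu1.1, hu1.2.le, Or.inl ⟨hu1.2, hu2, ?_⟩⟩
      have htri : diam (γ '' Icc s b) ≤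
          diam (γ '' Icc s (next s)) + diam (γ '' Icc (next s) b) :=
        wca_tri hcont hu1.1.le hu1.2.le
      rw [hu2] at htri; linarith
    · have hval : next s = b := by
        rw [hnextdef]; exact dif_neg (fun hc => hgt hc.1)
      exact ⟨hval ▸ hsb, hval.le, Or.inr ⟨hval, not_lt.1 hgt⟩⟩
  -- invariant
  have hinv : ∀ i, a ≤ t i ∧ t i ≤ b ∧ (t i < b → D * D / 2 < diam (γ '' Icc (t i) b)) := by
    intro i
    induction i with
    | zero => exact ⟨le_rfl, hab', fun _ => by rw [htz, ← hDdef]; linarith⟩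
    | succ i ih =>
      rcases eq_or_lt_of_le ih.2.1 with heq | hlt
      · rw [htsucc, heq, hnextb]
        exact ⟨hab', le_rfl, fun h => absurd h (lt_irrefl b)⟩
      · obtain ⟨h1, h2, h3⟩ := hstep (t i) ih.1 hlt (ih.2.2 hlt)
        rw [htsucc]
        refine ⟨ih.1.trans h1.le, h2, fun hb' => ?_⟩
        rcases h3 with ⟨-, -, h⟩ | ⟨heqb, -⟩
        · exact h
        · exact absurd (heqb ▸ hb') (lt_irrefl b)
  -- growth of variation
  have hgrow : ∀ i, t i < b → ENNReal.ofReal (i * (D * D / 2)) ≤ eVariationOn γ (Icc a (t i)) := by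
    intro i
    induction i with
    | zero => intro _; simp
    | succ i ih =>
      intro hib
      have hib' : t i < b := by
        rcases eq_or_lt_of_le (hinv i).2.1 with heq | h
        · rw [htsucc, heq, hnextb] at hib; exact absurd hib (lt_irrefl b)
        · exact h
      obtain ⟨h1, h2, h3⟩ := hstep (t i) (hinv i).1 hib' ((hinv i).2.2 hib')
      have hpiece : diam (γ '' Icc (t i) (t (i+1))) = D * D / 2 := by
        rcases h3 with ⟨-, h, -⟩ | ⟨heqb, -⟩
        · rw [htsucc]; exact h
        · rw [htsucc, heqb] at hib; exact absurd hib (lt_irrefl b)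
      have hvp : ENNReal.ofReal (D * D / 2) ≤ eVariationOn γ (Icc (t i) (t (i+1))) := by
        have hd := wca_diam_le_var hcont hrect (ha.trans (hinv i).1)
          ((hinv (i+1)).2.1.trans hb) (t := t (i+1))
        rw [hpiece] at hd
        calc ENNReal.ofReal (D * D / 2)
            ≤ ENNReal.ofReal (eVariationOn γ (Icc (t i) (t (i+1)))).toReal :=
              ENNReal.ofReal_le_ofReal hd
          _ = eVariationOn γ (Icc (t i) (t (i+1))) :=
              ENNReal.ofReal_toReal (hfin _ _ (ha.trans (hinv i).1) ((hinv (i+1)).2.1.trans hb))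
      have hadd : eVariationOn γ (Icc a (t i)) + eVariationOn γ (Icc (t i) (t (i+1))) =
          eVariationOn γ (Icc a (t (i+1))) := by
        have hle' : t i ≤ t (i+1) := (htsucc i) ▸ h1.le
        have := eVariationOn.Icc_add_Icc γ (s := univ) (hinv i).1 hle' (mem_univ (t i))
        simpa using this
      calc ENNReal.ofReal ((i+1 : ℕ) * (D * D / 2))
          = ENNReal.ofReal (i * (D * D / 2) + D * D / 2) := by push_cast; ring_nf
        _ = ENNReal.ofReal (i * (D * D / 2)) + ENNReal.ofReal (D * D / 2) :=
            ENNReal.ofReal_add (by positivity) (by positivity)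
        _ ≤ eVariationOn γ (Icc a (t i)) + eVariationOn γ (Icc (t i) (t (i+1))) :=
            add_le_add (ih hib') hvp
        _ = eVariationOn γ (Icc a (t (i+1))) := hadd
  -- the chord-arc variation bound
  have hvarab : eVariationOn γ (Icc a b) ≤ ENNReal.ofReal (2 * C * D) :=
    wca_var_bound hcont C hC hCA ha hab' hb
  -- termination
  have hex : ∃ n, t n = b := by
    by_contra h
    push_neg at h
    obtain ⟨n, hn⟩ := exists_nat_gt ((2 * C * D) / (D * D / 2))
    have htn : t n < b := lt_of_le_of_ne (hinv n).2.1 (h n)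
    have h1 := hgrow n htn
    have h2 : eVariationOn γ (Icc a (t n)) ≤ ENNReal.ofReal (2 * C * D) :=
      (eVariationOn.mono γ (Icc_subset_Icc le_rfl (hinv n).2.1)).trans hvarab
    have h3 : ENNReal.ofReal (n * (D * D / 2)) ≤ ENNReal.ofReal (2 * C * D) := h1.trans h2
    rw [ENNReal.ofReal_le_ofReal_iff (by nlinarith)] at h3
    have h4 : (n : ℝ) ≤ (2 * C * D) / (D * D / 2) := by
      rw [le_div_iff₀ hDD2]; linarith
    linarith
  set N := Nat.find hex with hNdef
  have hNb : t N = b := Nat.find_spec hex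
  have hN0 : 0 < N := by
    rcases Nat.eq_zero_or_pos N with h | h
    · rw [h] at hNb; rw [htz] at hNb; exact absurd hNb (ne_of_lt hab)
    · exact h
  have hiltb : ∀ i < N, t i < b := fun i hi =>
    lt_of_le_of_ne (hinv i).2.1 (Nat.find_min hex hi)
  have hstepi : ∀ i < N, t i < t (i+1) ∧ t (i+1) ≤ b ∧
      ((t (i+1) < b ∧ diam (γ '' Icc (t i) (t (i+1))) = D * D / 2 ∧
          D * D / 2 < diam (γ '' Icc (t (i+1)) b))
        ∨ (t (i+1) = b ∧ diam (γ '' Icc (t i) b) ≤ D * D)) := by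
    intro i hi
    have := hstep (t i) (hinv i).1 (hiltb i hi) ((hinv i).2.2 (hiltb i hi))
    rw [← htsucc] at this
    exact this
  have hmono' : ∀ i < N, t i ≤ t (i+1) := fun i hi => (hstepi i hi).1.le
  refine ⟨N, t, hN0, htz, hNb, fun i hi => (hstepi i hi).1, fun i hi => ?_, ?_⟩
  · -- piece bounds
    obtain ⟨h1, h2, h3⟩ := hstepi i hi
    have hring : D / 2 * D = D * D / 2 := by ring
    rcases h3 with ⟨-, heq, -⟩ | ⟨heqb, hub⟩
    · rw [heq]; constructor
      · linarith
      · linarith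
    · rw [heqb]
      constructor
      · have := (hinv i).2.2 (hiltb i hi)
        linarith
      · exact hub
  · -- sum bound
    have hsum1 : ∀ i ∈ Finset.range N, diam (γ '' Icc (t i) (t (i+1))) ≤
        (eVariationOn γ (Icc (t i) (t (i+1)))).toReal := by
      intro i hi
      exact wca_diam_le_var hcont hrect (ha.trans (hinv i).1) ((hinv (i+1)).2.1.trans hb)
    have hsum2 : (∑ i ∈ Finset.range N, diam (γ '' Icc (t i) (t (i+1)))) ≤
        ∑ i ∈ Finset.range N, (eVariationOn γ (Icc (t i) (t (i+1)))).toReal :=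
      Finset.sum_le_sum hsum1
    have hsum3 : ∑ i ∈ Finset.range N, (eVariationOn γ (Icc (t i) (t (i+1)))).toReal =
        (∑ i ∈ Finset.range N, eVariationOn γ (Icc (t i) (t (i+1)))).toReal :=
      (ENNReal.toReal_sum (fun i _ =>
        hfin _ _ (ha.trans (hinv i).1) ((hinv (i+1)).2.1.trans hb))).symm
    have hsum4 : (∑ i ∈ Finset.range N, eVariationOn γ (Icc (t i) (t (i+1)))) =
        eVariationOn γ (Icc a b) := by
      rw [wca_chain γ t N hmono', htz, hNb]
    have hsum5 : (eVariationOn γ (Icc a b)).toReal ≤ 2 * C * D :=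
      ENNReal.toReal_le_of_le_ofReal (by nlinarith) hvarab
    rw [div_le_iff₀ hD0]
    calc (∑ i ∈ Finset.range N, diam (γ '' Set.Icc (t i) (t (i+1))))
        ≤ ∑ i ∈ Finset.range N, (eVariationOn γ (Icc (t i) (t (i+1)))).toReal := hsum2
      _ = (∑ i ∈ Finset.range N, eVariationOn γ (Icc (t i) (t (i+1)))).toReal := hsum3
      _ = (eVariationOn γ (Icc a b)).toReal := by rw [hsum4]
      _ ≤ 2 * C * D := hsum5
end

section
/- Suppose Γ is a K-quasiarc, δ ∈ (0,1), and P is a δ-partition of Γ with |P| ≤ N₀/δ for some N₀ > 1. Then there exists N₁ depending only on K and N₀ such that for all δ' ∈ [δ, 1) and all δ'-partitions P' of Γ, we have |P'| ≤ N₁/δ'. -/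
open Metric Set MeasureTheory ENNReal Bornology

lemma mono_of_step {n : ℕ} {u : ℕ → ℝ} (h : ∀ i < n, u i ≤ u (i+1)) :
    ∀ i j, i ≤ j → j ≤ n → u i ≤ u j := by
  intro i j hij hjn
  induction j with
  | zero => exact le_of_eq (by rw [Nat.le_zero.mp hij])
  | succ k ih =>
    rcases Nat.eq_or_lt_of_le hij with h1 | h1
    · rw [h1]
    · exact le_trans (ih (by omega) (by omega)) (h k (by omega))

lemma diam_chain (γ : ℝ → EuclideanSpace ℝ (Fin 2)) (u : ℕ → ℝ) (m : ℕ)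
    (hm : ∀ j < m, u j ≤ u (j+1)) :
    diam (γ '' Icc (u 0) (u m)) ≤ ∑ j ∈ Finset.range m, diam (γ '' Icc (u j) (u (j+1))) := by
  induction m with
  | zero => simp
  | succ k ih =>
    have h0k : u 0 ≤ u k :=
      mono_of_step (n := k) (fun j hj => hm j (by omega)) 0 k (by omega) le_rfl
    have hkk : u k ≤ u (k+1) := hm k (by omega)
    have hsplit : Icc (u 0) (u (k+1)) = Icc (u 0) (u k) ∪ Icc (u k) (u (k+1)) :=
      (Set.Icc_union_Icc_eq_Icc h0k hkk).symm
    rw [hsplit, Set.image_union, Finset.sum_range_succ]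
    refine le_trans (diam_union' ⟨γ (u k), ?_, ?_⟩) ?_
    · exact ⟨u k, ⟨h0k, le_rfl⟩, rfl⟩
    · exact ⟨u k, ⟨le_rfl, hkk⟩, rfl⟩
    · exact add_le_add_left (ih (fun j hj => hm j (by omega))) _

lemma packing (s : Finset ℕ) (p : ℕ → EuclideanSpace ℝ (Fin 2)) (x : EuclideanSpace ℝ (Fin 2))
    (r R : ℝ) (hr : 0 < r) (hR : 0 < R)
    (hsep : ∀ i ∈ s, ∀ j ∈ s, i ≠ j → r ≤ dist (p i) (p j))
    (hmem : ∀ i ∈ s, dist (p i) x ≤ R) :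
    (s.card : ℝ) ≤ (2 * R / r + 1) ^ 2 := by
  have hdisj : (↑s : Set ℕ).Pairwise (Function.onFun Disjoint fun i => Metric.ball (p i) (r/2)) := by
    intro i hi j hj hij
    exact Metric.ball_disjoint_ball (by linarith [hsep i hi j hj hij])
  have hsub : ∀ i ∈ s, Metric.ball (p i) (r/2) ⊆ Metric.ball x (R + r/2) := by
    intro i hi y hy
    have h1 := hmem i hi
    simp only [Metric.mem_ball] at *
    calc dist y x ≤ dist y (p i) + dist (p i) x := dist_triangle _ _ _
      _ < R + r/2 := by linarith
  have hμ : ∑ i ∈ s, volume (Metric.ball (p i) (r/2)) ≤ volume (Metric.ball x (R + r/2)) := by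
    rw [← MeasureTheory.measure_biUnion_finset hdisj (fun i _ => measurableSet_ball)]
    exact measure_mono (Set.iUnion₂_subset hsub)
  set V := volume (Metric.ball (0 : EuclideanSpace ℝ (Fin 2)) 1) with hV
  have hball : ∀ (y : EuclideanSpace ℝ (Fin 2)) (ρ : ℝ), 0 ≤ ρ →
      volume (Metric.ball y ρ) = ENNReal.ofReal (ρ ^ 2) * V := by
    intro y ρ hρ
    rw [Measure.addHaar_ball volume y hρ, finrank_euclideanSpace_fin]
  have h2 : (s.card : ℝ≥0∞) * (ENNReal.ofReal ((r/2) ^ 2) * V) ≤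
      ENNReal.ofReal ((R + r/2) ^ 2) * V := by
    calc (s.card : ℝ≥0∞) * (ENNReal.ofReal ((r/2) ^ 2) * V)
        = ∑ i ∈ s, volume (Metric.ball (p i) (r/2)) := by
          rw [Finset.sum_congr rfl (fun i _ => hball (p i) (r/2) (by linarith))]
          rw [Finset.sum_const, nsmul_eq_mul]
      _ ≤ volume (Metric.ball x (R + r/2)) := hμ
      _ = _ := hball x _ (by linarith)
  have hV0 : V ≠ 0 := (measure_ball_pos volume _ one_pos).ne'
  have hVtop : V ≠ ⊤ := measure_ball_lt_top.ne
  rw [← mul_assoc, ENNReal.mul_le_mul_iff_left hV0 hVtop] at h2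
  have h3 : (s.card : ℝ) * ((r/2) ^ 2) ≤ (R + r/2) ^ 2 := by
    rw [← ENNReal.ofReal_natCast, ← ENNReal.ofReal_mul (by positivity)] at h2
    exact (ENNReal.ofReal_le_ofReal_iff (by positivity)).mp h2
  have hkey : (2 * R / r + 1) * (r / 2) = R + r / 2 := by field_simp
  have hrr : (0:ℝ) < (r/2)^2 := by positivity
  nlinarith [sq_nonneg (2*R/r + 1)]


/-- If `Γ` is a `K`-quasiarc, `δ ∈ (0,1)` and some `δ`-partition `P` of `Γ`
has `|P| ≤ N₀/δ`, then there is `N₁` depending only on `K, N₀` such that every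
`δ'`-partition `P'` of `Γ` with `δ' ∈ [δ,1)` has `|P'| ≤ N₁/δ'`. -/
theorem delta_partition_card_propagates :
    ∀ K N₀ : ℝ, 1 < K → 1 < N₀ → ∃ N₁ : ℝ, 0 < N₁ ∧
      ∀ γ : ℝ → EuclideanSpace ℝ (Fin 2),
        ContinuousOn γ (Set.Icc 0 1) →
        Set.InjOn γ (Set.Icc 0 1) →
        (∀ a ∈ Set.Icc (0 : ℝ) 1, ∀ b ∈ Set.Icc (0 : ℝ) 1, a ≤ b →
          diam (γ '' Set.Icc a b) ≤ K * dist (γ a) (γ b)) →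
        ∀ δ : ℝ, δ ∈ Set.Ioo (0 : ℝ) 1 →
        ∀ (N : ℕ) (t : ℕ → ℝ), 0 < N → t 0 = 0 → t N = 1 →
          (∀ i < N, t i < t (i + 1)) →
          (∀ i < N,
            δ / 2 * diam (γ '' Set.Icc 0 1) ≤ diam (γ '' Set.Icc (t i) (t (i + 1))) ∧
            diam (γ '' Set.Icc (t i) (t (i + 1))) ≤ δ * diam (γ '' Set.Icc 0 1)) →
          (N : ℝ) ≤ N₀ / δ →
        ∀ δ' : ℝ, δ ≤ δ' → δ' < 1 →
        ∀ (N' : ℕ) (t' : ℕ → ℝ), 0 < N' → t' 0 = 0 → t' N' = 1 →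
          (∀ i < N', t' i < t' (i + 1)) →
          (∀ i < N',
            δ' / 2 * diam (γ '' Set.Icc 0 1) ≤ diam (γ '' Set.Icc (t' i) (t' (i + 1))) ∧
            diam (γ '' Set.Icc (t' i) (t' (i + 1))) ≤ δ' * diam (γ '' Set.Icc 0 1)) →
          (N' : ℝ) ≤ N₁ / δ' := by
  intro K N₀ hK hN₀
  have hC0 : (0:ℝ) ≤ (4*K+1)^2 := sq_nonneg _
  refine ⟨2 * N₀ * (1 + (4*K+1)^2), by nlinarith, ?_⟩
  intro γ hcont hinj hqc δ hδ N t hN ht0 htN htlt hP hNb δ' hδδ' hδ'1 N' t' hN' ht'0 ht'N ht'lt hP'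
  classical
  obtain ⟨hδ0, hδ1⟩ := hδ
  have hδ'0 : 0 < δ' := lt_of_lt_of_le hδ0 hδδ'
  set D := diam (γ '' Set.Icc (0:ℝ) 1) with hDdef
  have hbig : IsBounded (γ '' Set.Icc (0:ℝ) 1) :=
    (isCompact_Icc.image_of_continuousOn hcont).isBounded
  have h01 : (0:ℝ) ∈ Set.Icc (0:ℝ) 1 := by norm_num
  have h11 : (1:ℝ) ∈ Set.Icc (0:ℝ) 1 := by norm_num
  have hD : 0 < D := by
    have hne : γ 0 ≠ γ 1 := fun h => (by norm_num : (0:ℝ) ≠ 1) (hinj h01 h11 h)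
    have h1 := dist_le_diam_of_mem hbig ⟨0, h01, rfl⟩ ⟨1, h11, rfl⟩
    have h2 := dist_pos.mpr hne
    linarith
  have htm : ∀ i j, i ≤ j → j ≤ N → t i ≤ t j := mono_of_step (fun i hi => (htlt i hi).le)
  have ht'm : ∀ i j, i ≤ j → j ≤ N' → t' i ≤ t' j := mono_of_step (fun i hi => (ht'lt i hi).le)
  have htmem : ∀ j, j ≤ N → t j ∈ Set.Icc (0:ℝ) 1 := fun j hj =>
    ⟨ht0 ▸ htm 0 j (Nat.zero_le _) hj, htN ▸ htm j N hj le_rfl⟩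
  have ht'mem : ∀ j, j ≤ N' → t' j ∈ Set.Icc (0:ℝ) 1 := fun j hj =>
    ⟨ht'0 ▸ ht'm 0 j (Nat.zero_le _) hj, ht'N ▸ ht'm j N' hj le_rfl⟩
  have hbd : ∀ u v : ℝ, u ∈ Set.Icc (0:ℝ) 1 → v ∈ Set.Icc (0:ℝ) 1 →
      IsBounded (γ '' Set.Icc u v) := fun u v hu hv =>
    hbig.subset (Set.image_mono (Set.Icc_subset_Icc hu.1 hv.2))
  -- the fiber map a
  set a : ℕ → ℕ := fun i => Nat.findGreatest (fun j => t j ≤ t' i) N with ha_def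
  have ha_le : ∀ i, a i ≤ N := fun i => Nat.findGreatest_le N
  have ha_spec : ∀ i, i ≤ N' → t (a i) ≤ t' i := by
    intro i hi
    exact Nat.findGreatest_spec (P := fun j => t j ≤ t' i) (Nat.zero_le N)
      (show t 0 ≤ t' i by rw [ht0]; exact (ht'mem i hi).1)
  have ht'lt1 : ∀ i, i < N' → t' i < 1 := by
    intro i hi
    calc t' i < t' (i+1) := ht'lt i hi
      _ ≤ 1 := ht'N ▸ ht'm (i+1) N' hi le_rfl
  have ha_lt : ∀ i, i < N' → a i < N := by
    intro i hi
    rcases Nat.lt_or_ge (a i) N with h | h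
    · exact h
    · exfalso
      have he : a i = N := le_antisymm (ha_le i) h
      have h1 := ha_spec i hi.le
      rw [he, htN] at h1
      exact absurd (ht'lt1 i hi) (not_lt.mpr h1)
  have ha_max : ∀ i k, a i < k → k ≤ N → t' i < t k := fun i k h1 h2 =>
    lt_of_not_ge (Nat.findGreatest_is_greatest h1 h2)
  have ha_mono : ∀ i j, i ≤ j → j ≤ N' → a i ≤ a j := fun i j hij hj =>
    Nat.le_findGreatest (ha_le i) (le_trans (ha_spec i (le_trans hij hj)) (ht'm i j hij hj))
  have hK0 : (0:ℝ) < K := by linarith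
  -- separation of the sample points γ (t' i)
  have hsep : ∀ i j, i < j → j ≤ N' → δ * D / (2*K) ≤ dist (γ (t' i)) (γ (t' j)) := by
    intro i j hij hj
    have hi : i < N' := lt_of_lt_of_le hij hj
    have h1 : δ' / 2 * D ≤ diam (γ '' Set.Icc (t' i) (t' (i+1))) := (hP' i hi).1
    have h2 : diam (γ '' Set.Icc (t' i) (t' (i+1))) ≤ diam (γ '' Set.Icc (t' i) (t' j)) :=
      diam_mono (Set.image_mono (Set.Icc_subset_Icc le_rfl (ht'm (i+1) j hij hj)))
        (hbd _ _ (ht'mem i hi.le) (ht'mem j hj))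
    have h3 : diam (γ '' Set.Icc (t' i) (t' j)) ≤ K * dist (γ (t' i)) (γ (t' j)) :=
      hqc _ (ht'mem i hi.le) _ (ht'mem j hj) (ht'm i j hij.le hj)
    have h4 : δ / 2 * D ≤ K * dist (γ (t' i)) (γ (t' j)) := by nlinarith
    rw [div_le_iff₀ (by linarith : (0:ℝ) < 2*K)]
    nlinarith
  -- fiber bound via packing
  set C : ℕ := ⌊(4*K+1)^2⌋₊ with hC_def
  have hfiber : ∀ b ∈ Finset.range N,
      ((Finset.range N').filter (fun i => a i = b)).card ≤ C := by
    intro b hb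
    rw [Finset.mem_range] at hb
    apply Nat.le_floor
    have hmemf : ∀ i ∈ (Finset.range N').filter (fun i => a i = b),
        i < N' ∧ a i = b := by
      intro i hi
      rw [Finset.mem_filter, Finset.mem_range] at hi
      exact hi
    have hpack := packing ((Finset.range N').filter (fun i => a i = b))
      (fun i => γ (t' i)) (γ (t b)) (δ * D / (2*K)) (δ * D)
      (by positivity) (by positivity)
      (by
        intro i hi j hj hij
        obtain ⟨hi1, hi2⟩ := hmemf i hi
        obtain ⟨hj1, hj2⟩ := hmemf j hj
        rcases lt_or_gt_of_ne hij with h | h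
        · exact hsep i j h hj1.le
        · rw [dist_comm]
          exact hsep j i h hi1.le)
      (by
        intro i hi
        obtain ⟨hi1, hi2⟩ := hmemf i hi
        have hmem1 : γ (t' i) ∈ γ '' Set.Icc (t b) (t (b+1)) :=
          ⟨t' i, ⟨hi2 ▸ ha_spec i hi1.le, (ha_max i (b+1) (by omega) hb).le⟩, rfl⟩
        have hmem2 : γ (t b) ∈ γ '' Set.Icc (t b) (t (b+1)) :=
          ⟨t b, ⟨le_rfl, (htlt b hb).le⟩, rfl⟩
        calc dist (γ (t' i)) (γ (t b))
            ≤ diam (γ '' Set.Icc (t b) (t (b+1))) :=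
              dist_le_diam_of_mem (hbd _ _ (htmem b hb.le) (htmem (b+1) hb)) hmem1 hmem2
          _ ≤ δ * D := (hP b hb).2)
    refine le_trans hpack (le_of_eq ?_)
    congr 1
    have hδD : δ * D ≠ 0 := by positivity
    field_simp
    ring
  -- F2 : N' ≤ C * N
  have hF2 : (N' : ℝ) ≤ (4*K+1)^2 * N := by
    have h1 : N' ≤ N * C := by
      have he := Finset.card_eq_sum_card_fiberwise
        (f := a) (s := Finset.range N') (t := Finset.range N)
        (fun i hi => Finset.mem_range.mpr (ha_lt i (Finset.mem_range.mp hi)))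
      rw [Finset.card_range] at he
      rw [he]
      calc ∑ b ∈ Finset.range N, ((Finset.range N').filter (fun i => a i = b)).card
          ≤ ∑ b ∈ Finset.range N, C := Finset.sum_le_sum hfiber
        _ = N * C := by rw [Finset.sum_const, Finset.card_range, smul_eq_mul]
    have h2 : ((N * C : ℕ) : ℝ) ≤ (N:ℝ) * ((4*K+1)^2) := by
      push_cast
      exact mul_le_mul_of_nonneg_left (Nat.floor_le hC0) (Nat.cast_nonneg N)
    calc (N' : ℝ) ≤ ((N * C : ℕ) : ℝ) := Nat.cast_le.mpr h1
      _ ≤ (N:ℝ) * ((4*K+1)^2) := h2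
      _ = (4*K+1)^2 * N := mul_comm _ _
  -- F1 : counting overlaps
  set c : ℕ → ℕ := fun i => if i+1 = N' then N else a (i+1) + 1 with hc_def
  have hc_le : ∀ i, i < N' → c i ≤ N := by
    intro i hi
    by_cases h : i+1 = N'
    · simp [hc_def, h]
    · simp only [hc_def, h, if_false]
      exact ha_lt (i+1) (by omega)
  have hac : ∀ i, i < N' → a i ≤ c i := by
    intro i hi
    by_cases h : i+1 = N'
    · simp only [hc_def, h, if_true]
      exact ha_le i
    · simp only [hc_def, h, if_false]
      have := ha_mono i (i+1) (by omega) (by omega)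
      omega
  have hkey : ∀ i, i < N' → δ' / 2 * D ≤ ((c i : ℝ) - (a i : ℝ)) * (δ * D) := by
    intro i hi
    have hsubI : Set.Icc (t' i) (t' (i+1)) ⊆ Set.Icc (t (a i)) (t (c i)) := by
      apply Set.Icc_subset_Icc (ha_spec i hi.le)
      by_cases h : i+1 = N'
      · have hcN : c i = N := by simp [hc_def, h]
        rw [hcN, htN, ← ht'N]
        exact ht'm (i+1) N' (by omega) le_rfl
      · have hcN : c i = a (i+1) + 1 := by simp [hc_def, h]
        rw [hcN]
        exact (ha_max (i+1) (a (i+1) + 1) (by omega) (ha_lt (i+1) (by omega))).le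
    have h1 : δ'/2 * D ≤ diam (γ '' Set.Icc (t' i) (t' (i+1))) := (hP' i hi).1
    have h2 : diam (γ '' Set.Icc (t' i) (t' (i+1))) ≤ diam (γ '' Set.Icc (t (a i)) (t (c i))) :=
      diam_mono (Set.image_mono hsubI)
        (hbd _ _ (htmem _ (ha_le i)) (htmem _ (hc_le i hi)))
    have h3 : diam (γ '' Set.Icc (t (a i)) (t (c i))) ≤ ((c i : ℝ) - (a i : ℝ)) * (δ * D) := by
      have hchain := diam_chain γ (fun j => t (a i + j)) (c i - a i)
        (fun j hj => (htlt (a i + j) (by have := hc_le i hi; omega)).le)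
      simp only [Nat.add_zero] at hchain
      rw [show a i + (c i - a i) = c i by have := hac i hi; omega] at hchain
      refine le_trans hchain ?_
      calc ∑ j ∈ Finset.range (c i - a i), diam (γ '' Set.Icc (t (a i + j)) (t (a i + j + 1)))
          ≤ ∑ j ∈ Finset.range (c i - a i), δ * D := by
            refine Finset.sum_le_sum (fun j hj => ?_)
            rw [Finset.mem_range] at hj
            exact (hP (a i + j) (by have := hc_le i hi; omega)).2
        _ = ((c i - a i : ℕ) : ℝ) * (δ * D) := by
            rw [Finset.sum_const, Finset.card_range, nsmul_eq_mul]
        _ = ((c i : ℝ) - (a i : ℝ)) * (δ * D) := by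
            rw [Nat.cast_sub (hac i hi)]
    linarith
  have hsum2 : ∑ i ∈ Finset.range N', ((c i : ℝ) - (a i : ℝ)) ≤ (N:ℝ) + N' := by
    set A : ℕ → ℝ := fun i => if i = N' then (N:ℝ) else (a i : ℝ) with hA
    have hterm : ∀ i ∈ Finset.range N', ((c i:ℝ) - (a i:ℝ)) ≤ (A (i+1) - A i) + 1 := by
      intro i hi
      rw [Finset.mem_range] at hi
      have hiN : i ≠ N' := by omega
      by_cases h : i + 1 = N'
      · simp only [hA, hc_def, h, if_true, hiN, if_false]
        push_cast; linarith
      · simp only [hA, hc_def, h, if_false, hiN]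
        push_cast; linarith
    calc ∑ i ∈ Finset.range N', ((c i:ℝ) - (a i:ℝ))
        ≤ ∑ i ∈ Finset.range N', ((A (i+1) - A i) + 1) := Finset.sum_le_sum hterm
      _ = (A N' - A 0) + N' := by
          rw [Finset.sum_add_distrib, Finset.sum_range_sub, Finset.sum_const,
            Finset.card_range, nsmul_eq_mul, mul_one]
      _ ≤ (N:ℝ) + N' := by
          have h0 : (0:ℕ) ≠ N' := by omega
          simp only [hA, if_pos rfl, h0, if_false]
          have : (0:ℝ) ≤ (a 0 : ℝ) := Nat.cast_nonneg _
          linarith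
  have hF1 : (N' : ℝ) * (δ' / 2 * D) ≤ ((N:ℝ) + N') * (δ * D) := by
    calc (N' : ℝ) * (δ' / 2 * D)
        = ∑ _i ∈ Finset.range N', (δ'/2 * D) := by
          rw [Finset.sum_const, Finset.card_range, nsmul_eq_mul]
      _ ≤ ∑ i ∈ Finset.range N', ((c i:ℝ) - (a i:ℝ)) * (δ * D) :=
          Finset.sum_le_sum (fun i hi => hkey i (Finset.mem_range.mp hi))
      _ = (∑ i ∈ Finset.range N', ((c i:ℝ) - (a i:ℝ))) * (δ * D) := by
          rw [Finset.sum_mul]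
      _ ≤ ((N:ℝ) + N') * (δ * D) :=
          mul_le_mul_of_nonneg_right hsum2 (by positivity)
  -- final arithmetic
  have hcancel : (N':ℝ) * δ' ≤ 2 * δ * ((N:ℝ) + N') := by nlinarith
  have hδN : δ * N ≤ N₀ := by
    rw [le_div_iff₀ hδ0] at hNb; linarith
  rw [le_div_iff₀ hδ'0]
  have hstep : 2 * δ * (N':ℝ) ≤ 2 * ((4*K+1)^2) * (δ * N) := by nlinarith
  nlinarith
end

section
/- Let Γ be a K-quasicircle satisfying the weak chord-arc property with constant M₀. Then for α = 1/2 there exists M_{1/2} > 1 depending only on K, M₀ such that for every subarc Γ' ⊂ Γ with diam(Γ') < 1 and every (diam Γ')-partition P of Γ' (i.e., a (diam Γ')^{(1/α)−1}-partition with α = 1/2 is exactly a diam(Γ')-partition), M(Γ',P) ≤ M_{1/2}. More generally, for every α ∈ [1/2,1) there exists M_α depending only on K, M₀, α such that every (diam Γ')^{(1/α)−1}-partition P of any subarc Γ' with diam(Γ') < 1 satisfies M(Γ',P) ≤ M_α. -/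
open Metric Set Bornology

lemma pack_lemma (s R : ℝ) (hs : 0 < s) (T : Finset ℕ) (x : ℕ → EuclideanSpace ℝ (Fin 2))
    (hsep : ∀ i ∈ T, ∀ j ∈ T, i ≠ j → s ≤ dist (x i) (x j))
    (hRb : ∀ i ∈ T, ∀ j ∈ T, dist (x i) (x j) ≤ R) :
    (T.card : ℝ) ≤ (4 * R / s + 3) ^ 2 := by
  rcases T.eq_empty_or_nonempty with hT | ⟨i₀, hi₀⟩
  · simp [hT]; positivity
  have hR0 : 0 ≤ R := by
    have := hRb i₀ hi₀ i₀ hi₀; rwa [dist_self] at this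
  set h : ℝ := s / 2 with hh
  have hh0 : 0 < h := by positivity
  have coord_le_dist : ∀ i j : ℕ, ∀ k : Fin 2, |x i k - x j k| ≤ dist (x i) (x j) := by
    intro i j k
    rw [EuclideanSpace.dist_eq]
    have h1 : |x i k - x j k| = Real.sqrt (|x i k - x j k| ^ 2) :=
      (Real.sqrt_sq (abs_nonneg _)).symm
    rw [h1]
    apply Real.sqrt_le_sqrt
    rw [sq_abs]
    calc (x i k - x j k) ^ 2 = dist (x i k) (x j k) ^ 2 := by rw [Real.dist_eq, sq_abs]
      _ ≤ ∑ l, dist (x i l) (x j l) ^ 2 :=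
        Finset.single_le_sum (f := fun l => dist (x i l) (x j l) ^ 2)
          (fun l _ => sq_nonneg _) (Finset.mem_univ k)
  set φ : ℕ → ℤ × ℤ := fun i => (⌊x i 0 / h⌋, ⌊x i 1 / h⌋) with hφ
  have hinj : Set.InjOn φ T := by
    intro i hi j hj hij
    by_contra hne
    have key : ∀ k : Fin 2, dist (x i k) (x j k) ≤ h := by
      intro k
      have hfe : ⌊x i k / h⌋ = ⌊x j k / h⌋ := by
        fin_cases k
        · exact congrArg Prod.fst hij
        · exact congrArg Prod.snd hij
      have h2 : |x i k / h - x j k / h| < 1 := Int.abs_sub_lt_one_of_floor_eq_floor hfe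
      have h3 : |x i k - x j k| < h := by
        have : x i k - x j k = (x i k / h - x j k / h) * h := by field_simp
        rw [this, abs_mul, abs_of_pos hh0]
        nlinarith [abs_nonneg (x i k / h - x j k / h)]
      rw [Real.dist_eq]
      exact le_of_lt h3
    have hdlt : dist (x i) (x j) < s := by
      rw [EuclideanSpace.dist_eq]
      have hsum : ∑ l, dist (x i l) (x j l) ^ 2 ≤ h ^ 2 + h ^ 2 := by
        rw [Fin.sum_univ_two]
        have k0 := key 0; have k1 := key 1
        nlinarith [dist_nonneg (x := x i 0) (y := x j 0), dist_nonneg (x := x i 1) (y := x j 1)]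
      calc Real.sqrt (∑ l, dist (x i l) (x j l) ^ 2) ≤ Real.sqrt (h ^ 2 + h ^ 2) :=
            Real.sqrt_le_sqrt hsum
        _ < s := by
            rw [show h ^ 2 + h ^ 2 = 2 * h ^ 2 by ring]
            rw [show (2 : ℝ) * h ^ 2 = (Real.sqrt 2 * h) ^ 2 by
              rw [mul_pow, Real.sq_sqrt (by norm_num : (2:ℝ) ≥ 0)]]
            rw [Real.sqrt_sq (by positivity)]
            have : Real.sqrt 2 < 2 := by
              nlinarith [Real.sq_sqrt (show (0:ℝ) ≤ 2 by norm_num),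
                Real.sqrt_nonneg 2]
            calc Real.sqrt 2 * h < 2 * h := by nlinarith
              _ = s := by rw [hh]; ring
    exact absurd (hsep i hi j hj hne) (not_le.mpr hdlt)
  set m : ℤ := ⌊R / h⌋ + 1 with hm
  have floor_bd : ∀ i ∈ T, ∀ k : Fin 2, ⌊x i₀ k / h⌋ - m ≤ ⌊x i k / h⌋ ∧
      ⌊x i k / h⌋ ≤ ⌊x i₀ k / h⌋ + m := by
    intro i hi k
    have habs := coord_le_dist i i₀ k
    have hd := hRb i hi i₀ hi₀
    have h1 : |x i k - x i₀ k| ≤ R := le_trans habs hd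
    rw [abs_le] at h1
    constructor
    · have : x i₀ k / h - R / h ≤ x i k / h := by
        rw [div_sub_div_same, div_le_div_iff₀ hh0 hh0]
        nlinarith [h1.1]
      have h4 : ⌊x i₀ k / h⌋ ≤ ⌊x i k / h + R / h⌋ := by
        apply Int.floor_le_floor
        linarith
      have h5 : ⌊x i k / h + R / h⌋ ≤ ⌊x i k / h⌋ + m := by
        rw [hm, Int.floor_le_iff]
        push_cast
        have := Int.lt_floor_add_one (x i k / h)
        have := Int.lt_floor_add_one (R / h)
        linarith
      omega
    · have h4 : ⌊x i k / h⌋ ≤ ⌊x i₀ k / h + R / h⌋ := by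
        apply Int.floor_le_floor
        have : x i k - x i₀ k ≤ R := h1.2
        rw [← add_div, div_le_div_iff₀ hh0 hh0]
        nlinarith
      have h5 : ⌊x i₀ k / h + R / h⌋ ≤ ⌊x i₀ k / h⌋ + m := by
        rw [hm, Int.floor_le_iff]
        push_cast
        have := Int.lt_floor_add_one (x i₀ k / h)
        have := Int.lt_floor_add_one (R / h)
        linarith
      omega
  set box : Finset (ℤ × ℤ) :=
    Finset.Icc (⌊x i₀ 0 / h⌋ - m) (⌊x i₀ 0 / h⌋ + m) ×ˢ
    Finset.Icc (⌊x i₀ 1 / h⌋ - m) (⌊x i₀ 1 / h⌋ + m) with hbox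
  have himg : T.image φ ⊆ box := by
    intro p hp
    rw [Finset.mem_image] at hp
    obtain ⟨i, hi, rfl⟩ := hp
    rw [hbox, Finset.mem_product, Finset.mem_Icc, Finset.mem_Icc]
    exact ⟨⟨(floor_bd i hi 0).1, (floor_bd i hi 0).2⟩,
      ⟨(floor_bd i hi 1).1, (floor_bd i hi 1).2⟩⟩
  have hcard : T.card ≤ box.card := by
    rw [← Finset.card_image_of_injOn hinj]
    exact Finset.card_le_card himg
  have hboxcard : box.card = ((2 * m + 1).toNat) * ((2 * m + 1).toNat) := by
    rw [hbox, Finset.card_product, Int.card_Icc, Int.card_Icc]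
    congr 1 <;> congr 1 <;> ring
  have hm0 : 0 ≤ m := by
    rw [hm]
    have : (0:ℤ) ≤ ⌊R / h⌋ := Int.le_floor.mpr (by push_cast; positivity)
    omega
  have hmR : (m : ℝ) ≤ 2 * R / s + 1 := by
    have h1 : (⌊R / h⌋ : ℝ) ≤ R / h := Int.floor_le _
    have h2 : R / h = 2 * R / s := by rw [hh]; field_simp
    push_cast [hm]
    linarith
  have : (T.card : ℝ) ≤ ((2 * m + 1).toNat : ℝ) * ((2 * m + 1).toNat : ℝ) := by
    rw [← Nat.cast_mul, ← hboxcard]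
    exact_mod_cast hcard
  have htn : ((2 * m + 1).toNat : ℝ) = 2 * (m : ℝ) + 1 := by
    have h' : (((2 * m + 1).toNat : ℤ)) = 2 * m + 1 := Int.toNat_of_nonneg (by omega)
    exact_mod_cast h'
  rw [htn] at this
  have hbd : 2 * (m : ℝ) + 1 ≤ 4 * R / s + 3 := by
    have : 4 * R / s = 2 * (2 * R / s) := by ring
    linarith
  calc (T.card : ℝ) ≤ (2 * (m:ℝ) + 1) * (2 * (m:ℝ) + 1) := this
    _ ≤ (4 * R / s + 3) * (4 * R / s + 3) := by
        have h0 : (0:ℝ) ≤ 2 * (m:ℝ) + 1 := by positivity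
        nlinarith
    _ = (4 * R / s + 3) ^ 2 := by ring

lemma mono_aux (t : ℕ → ℝ) (N : ℕ) (h : ∀ i < N, t i < t (i + 1)) :
    ∀ p q, p ≤ q → q ≤ N → t p ≤ t q := by
  intro p q hpq hqN
  induction q with
  | zero =>
    have : p = 0 := Nat.le_zero.mp hpq
    simp [this]
  | succ q ih =>
    rcases Nat.lt_or_ge p (q + 1) with hlt | hge
    · have hpq' : p ≤ q := Nat.lt_succ_iff.mp hlt
      exact le_trans (ih hpq' (le_trans (Nat.le_succ q) hqN))
        (le_of_lt (h q (Nat.lt_of_lt_of_le (Nat.lt_succ_self q) hqN)))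
    · have : p = q + 1 := le_antisymm hpq hge
      simp [this]

lemma chain_diam (γ : ℝ → EuclideanSpace ℝ (Fin 2)) (s : ℕ → ℝ) (M : ℕ)
    (hmono : ∀ k l, k ≤ l → l ≤ M → s k ≤ s l) :
    ∀ p q, p ≤ q → q ≤ M →
      diam (γ '' Set.Icc (s p) (s q)) ≤
        ∑ j ∈ Finset.Ico p q, diam (γ '' Set.Icc (s j) (s (j + 1))) := by
  intro p q hpq hqM
  induction q with
  | zero =>
    have : p = 0 := Nat.le_zero.mp hpq
    subst this
    simp [Set.Icc_self]
  | succ q ih =>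
    rcases Nat.lt_or_ge p (q + 1) with hlt | hge
    · have hpq' : p ≤ q := Nat.lt_succ_iff.mp hlt
      have hqM' : q ≤ M := le_trans (Nat.le_succ q) hqM
      have h1 : s p ≤ s q := hmono p q hpq' hqM'
      have h2 : s q ≤ s (q + 1) := hmono q (q + 1) (Nat.le_succ q) hqM
      have hicc : Set.Icc (s p) (s (q + 1)) = Set.Icc (s p) (s q) ∪ Set.Icc (s q) (s (q + 1)) :=
        (Set.Icc_union_Icc_eq_Icc h1 h2).symm
      have himg : γ '' Set.Icc (s p) (s (q + 1)) =
          γ '' Set.Icc (s p) (s q) ∪ γ '' Set.Icc (s q) (s (q + 1)) := by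
        rw [hicc, Set.image_union]
      have hmem1 : γ (s q) ∈ γ '' Set.Icc (s p) (s q) :=
        Set.mem_image_of_mem γ (Set.right_mem_Icc.mpr h1)
      have hmem2 : γ (s q) ∈ γ '' Set.Icc (s q) (s (q + 1)) :=
        Set.mem_image_of_mem γ (Set.left_mem_Icc.mpr h2)
      have hdu : diam (γ '' Set.Icc (s p) (s (q + 1))) ≤
          diam (γ '' Set.Icc (s p) (s q)) + diam (γ '' Set.Icc (s q) (s (q + 1))) := by
        rw [himg]
        have := diam_union hmem1 hmem2
        rwa [dist_self, add_zero] at this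
      have hsum : ∑ j ∈ Finset.Ico p (q + 1), diam (γ '' Set.Icc (s j) (s (j + 1))) =
          (∑ j ∈ Finset.Ico p q, diam (γ '' Set.Icc (s j) (s (j + 1)))) +
            diam (γ '' Set.Icc (s q) (s (q + 1))) :=
        Finset.sum_Ico_succ_top hpq' _
      rw [hsum]
      exact le_trans hdu (by linarith [ih hpq' hqM'])
    · have : p = q + 1 := le_antisymm hpq hge
      subst this
      simp [Set.Icc_self]

set_option maxHeartbeats 1000000 in
/-- Let `Γ` be a `K`-quasicircle with the weak chord-arc property with
constant `M₀`. For every `α ∈ [1/2,1)` there is `M_α > 1` depending only on `K, M₀, α`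
such that every `(diam Γ')^{1/α − 1}`-partition `P` of any subarc `Γ'` with
`diam Γ' < 1` satisfies `M(Γ',P) ≤ M_α` (for `α = 1/2` these are exactly
the `diam Γ'`-partitions). -/
theorem weak_chord_arc_strong_form :
    ∀ K M₀ α : ℝ, 1 < K → 1 < M₀ → 1 / 2 ≤ α → α < 1 →
    ∃ Mα : ℝ, 1 < Mα ∧
      ∀ γ : ℝ → EuclideanSpace ℝ (Fin 2),
        ContinuousOn γ (Set.Icc 0 1) →
        Set.InjOn γ (Set.Ico 0 1) →
        γ 0 = γ 1 →
        -- 2-point (quasicircle) condition with constant K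
        (∀ a b : ℝ, 0 ≤ a → a ≤ b → b ≤ 1 →
          min (diam (γ '' Set.Icc a b)) (diam (γ '' (Set.Icc 0 a ∪ Set.Icc b 1))) ≤
            K * dist (γ a) (γ b)) →
        -- weak chord-arc property with constant M₀
        (∀ a b : ℝ, 0 ≤ a → a < b → b ≤ 1 → diam (γ '' Set.Icc a b) < 1 →
          ∃ (N : ℕ) (t : ℕ → ℝ), 0 < N ∧ t 0 = a ∧ t N = b ∧
            (∀ i < N, t i < t (i + 1)) ∧
            (∀ i < N,
              diam (γ '' Set.Icc a b) / 2 * diam (γ '' Set.Icc a b) ≤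
                diam (γ '' Set.Icc (t i) (t (i + 1))) ∧
              diam (γ '' Set.Icc (t i) (t (i + 1))) ≤
                diam (γ '' Set.Icc a b) * diam (γ '' Set.Icc a b)) ∧
            (∑ i ∈ Finset.range N, diam (γ '' Set.Icc (t i) (t (i + 1)))) /
                diam (γ '' Set.Icc a b) ≤ M₀) →
        -- conclusion: every (diam Γ')^{1/α − 1}-partition of a subarc has index ≤ Mα
        ∀ a b : ℝ, 0 ≤ a → a < b → b ≤ 1 → diam (γ '' Set.Icc a b) < 1 →
          ∀ (N : ℕ) (t : ℕ → ℝ), 0 < N → t 0 = a → t N = b →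
            (∀ i < N, t i < t (i + 1)) →
            (∀ i < N,
              diam (γ '' Set.Icc a b) ^ (1 / α - 1) / 2 * diam (γ '' Set.Icc a b) ≤
                diam (γ '' Set.Icc (t i) (t (i + 1))) ∧
              diam (γ '' Set.Icc (t i) (t (i + 1))) ≤
                diam (γ '' Set.Icc a b) ^ (1 / α - 1) * diam (γ '' Set.Icc a b)) →
            (∑ i ∈ Finset.range N, diam (γ '' Set.Icc (t i) (t (i + 1)))) /
                diam (γ '' Set.Icc a b) ≤ Mα := by
  intro K M₀ α hK hM₀ hα₁ hα₂
  have hα0 : 0 < α := by linarith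
  have hK0 : 0 < K := by linarith
  have he0 : 0 < 1 / α - 1 := by
    have h := one_lt_one_div hα0 hα₂
    linarith
  have he1 : 1 / α - 1 ≤ 1 := by
    have h2 : 1 / α ≤ 2 := by
      rw [div_le_iff₀ hα0]; linarith
    linarith
  refine ⟨((8 * K + 3) ^ 2 + 2) * M₀, ?_, ?_⟩
  · nlinarith [sq_nonneg (8 * K + 3)]
  intro γ hγcont _hγinj _hγ01 htwo hweak a b ha hab hb1 hd1 N t hN ht0 htN htinc hP
  set d := diam (γ '' Set.Icc a b) with hd
  have hd0 : 0 ≤ d := diam_nonneg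
  have tmono := mono_aux t N htinc
  rcases eq_or_lt_of_le hd0 with hdz | hdpos
  · -- degenerate case d = 0
    have hsum0 : ∑ i ∈ Finset.range N, diam (γ '' Set.Icc (t i) (t (i + 1))) = 0 := by
      apply Finset.sum_eq_zero
      intro i hi
      have h2 := (hP i (Finset.mem_range.mp hi)).2
      have hde : d ^ (1 / α - 1) * d = 0 := by
        rw [← hdz, Real.zero_rpow (ne_of_gt he0), zero_mul]
      exact le_antisymm (hde ▸ h2) diam_nonneg
    rw [hsum0, zero_div]
    nlinarith [sq_nonneg (8 * K + 3)]
  · obtain ⟨N₀, s, hN₀, hs0, hsN, hsinc, hsize, hsum⟩ := hweak a b ha hab hb1 hd1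
    have smono := mono_aux s N₀ hsinc
    have hta : ∀ i, i ≤ N → a ≤ t i := by
      intro i hi; have h := tmono 0 i (Nat.zero_le i) hi; rwa [ht0] at h
    have htb : ∀ i, i ≤ N → t i ≤ b := by
      intro i hi; have h := tmono i N hi le_rfl; rwa [htN] at h
    have hsa : ∀ j, j ≤ N₀ → a ≤ s j := by
      intro j hj; have h := smono 0 j (Nat.zero_le j) hj; rwa [hs0] at h
    have hsb : ∀ j, j ≤ N₀ → s j ≤ b := by
      intro j hj; have h := smono j N₀ hj le_rfl; rwa [hsN] at h
    have ht01 : ∀ i, i ≤ N → 0 ≤ t i ∧ t i ≤ 1 := fun i hi =>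
      ⟨le_trans ha (hta i hi), le_trans (htb i hi) hb1⟩
    have hs01 : ∀ j, j ≤ N₀ → 0 ≤ s j ∧ s j ≤ 1 := fun j hj =>
      ⟨le_trans ha (hsa j hj), le_trans (hsb j hj) hb1⟩
    have hbdd : IsBounded (γ '' Set.Icc 0 1) :=
      ((isCompact_Icc).image_of_continuousOn hγcont).isBounded
    have hbddsub : ∀ S : Set ℝ, S ⊆ Set.Icc 0 1 → IsBounded (γ '' S) := fun S hS =>
      hbdd.subset (Set.image_mono hS)
    set r := d ^ (1 / α - 1) / 2 * d with hr
    have hrpos : 0 < r := by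
      have hp := Real.rpow_pos_of_pos hdpos (1 / α - 1)
      rw [hr]; positivity
    -- separation of partition points
    have hsep : ∀ i i', i < i' → i' < N → r / K ≤ dist (γ (t i)) (γ (t i')) := by
      intro i i' hii hi'N
      have hiN : i < N := lt_trans hii hi'N
      have h2pt := htwo (t i) (t i') (ht01 i hiN.le).1
        (tmono i i' hii.le hi'N.le) (ht01 i' hi'N.le).2
      have hmid : r ≤ diam (γ '' Set.Icc (t i) (t i')) := by
        have hss : Set.Icc (t i) (t (i + 1)) ⊆ Set.Icc (t i) (t i') :=
          Set.Icc_subset_Icc le_rfl (tmono (i + 1) i' hii hi'N.le)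
        have hbb : IsBounded (γ '' Set.Icc (t i) (t i')) :=
          hbddsub _ (Set.Icc_subset_Icc (ht01 i hiN.le).1 (ht01 i' hi'N.le).2)
        exact le_trans (hP i hiN).1 (diam_mono (Set.image_mono hss) hbb)
      have hcompl : r ≤ diam (γ '' (Set.Icc 0 (t i) ∪ Set.Icc (t i') 1)) := by
        have hss : Set.Icc (t i') (t (i' + 1)) ⊆ Set.Icc 0 (t i) ∪ Set.Icc (t i') 1 :=
          Set.subset_union_of_subset_right
            (Set.Icc_subset_Icc le_rfl (ht01 (i' + 1) hi'N).2) _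
        have hbb : IsBounded (γ '' (Set.Icc 0 (t i) ∪ Set.Icc (t i') 1)) := by
          refine hbddsub _ (Set.union_subset ?_ ?_)
          · exact Set.Icc_subset_Icc le_rfl (ht01 i hiN.le).2
          · exact Set.Icc_subset_Icc (ht01 i' hi'N.le).1 le_rfl
        exact le_trans (hP i' hi'N).1 (diam_mono (Set.image_mono hss) hbb)
      have hmin : r ≤ K * dist (γ (t i)) (γ (t i')) := le_trans (le_min hmid hcompl) h2pt
      rw [div_le_iff₀ hK0, mul_comm]
      exact hmin
    -- the coarse-partition index function
    set J : ℕ → ℕ := fun i => Nat.findGreatest (fun j => s j ≤ t i) (N₀ - 1) with hJ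
    have hJle : ∀ i, J i ≤ N₀ - 1 := fun i => Nat.findGreatest_le _
    have hJlt : ∀ i, J i < N₀ := fun i => lt_of_le_of_lt (hJle i) (Nat.sub_lt hN₀ one_pos)
    have hJs : ∀ i, i ≤ N → s (J i) ≤ t i := by
      intro i hi
      have h0 : s 0 ≤ t i := by rw [hs0]; exact hta i hi
      have hres := Nat.findGreatest_spec (P := fun j => s j ≤ t i) (n := N₀ - 1) (m := 0) (Nat.zero_le _) h0
      simpa only [hJ] using hres
    have hJub : ∀ i, i ≤ N → t i ≤ s (J i + 1) := by
      intro i hi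
      by_cases hc : J i + 1 ≤ N₀ - 1
      · by_contra hcon
        push_neg at hcon
        have hle := Nat.le_findGreatest (P := fun j => s j ≤ t i) (n := N₀ - 1) hc hcon.le
        simp only [hJ] at *
        omega
      · have hJeq : J i + 1 = N₀ := by have h := hJle i; omega
        rw [hJeq, hsN]
        exact htb i hi
    have hJmono : ∀ i, i < N → J i ≤ J (i + 1) := by
      intro i hi
      have hres := Nat.le_findGreatest (P := fun j => s j ≤ t (i + 1)) (n := N₀ - 1) (hJle i)
        (le_trans (hJs i hi.le) (tmono i (i + 1) (Nat.le_succ i) hi))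
      simpa only [hJ] using hres
    -- each fine piece is dominated by a block of coarse pieces
    have hpiece : ∀ i, i < N → diam (γ '' Set.Icc (t i) (t (i + 1))) ≤
        ∑ j ∈ Finset.Icc (J i) (J (i + 1)), diam (γ '' Set.Icc (s j) (s (j + 1))) := by
      intro i hi
      have hsub : Set.Icc (t i) (t (i + 1)) ⊆ Set.Icc (s (J i)) (s (J (i + 1) + 1)) :=
        Set.Icc_subset_Icc (hJs i hi.le) (hJub (i + 1) hi)
      have hb' : IsBounded (γ '' Set.Icc (s (J i)) (s (J (i + 1) + 1))) := by
        refine hbddsub _ (Set.Icc_subset_Icc ?_ ?_)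
        · exact (hs01 (J i) (hJlt i).le).1
        · exact (hs01 (J (i + 1) + 1) (hJlt (i + 1))).2
      have h1 : diam (γ '' Set.Icc (t i) (t (i + 1))) ≤
          diam (γ '' Set.Icc (s (J i)) (s (J (i + 1) + 1))) :=
        diam_mono (Set.image_mono hsub) hb'
      have h2 := chain_diam γ s N₀ smono (J i) (J (i + 1) + 1)
        (by have h := hJmono i hi; omega) (hJlt (i + 1))
      rw [Finset.Ico_add_one_right_eq_Icc] at h2
      exact le_trans h1 h2
    -- bound the multiplicity of each coarse piece
    have hcnt : ∀ j, j < N₀ →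
        (((Finset.range N).filter (fun i => J i ≤ j ∧ j ≤ J (i + 1))).card : ℝ) ≤
          (8 * K + 3) ^ 2 + 2 := by
      intro j hj
      set C' := (Finset.range N).filter (fun i => s j ≤ t i ∧ t (i + 1) ≤ s (j + 1)) with hC'
      set A₁ := (Finset.range N).filter (fun i => t i < s j ∧ s j ≤ t (i + 1)) with hA₁
      set A₂ := (Finset.range N).filter
        (fun i => t i ≤ s (j + 1) ∧ s (j + 1) < t (i + 1)) with hA₂
      have hsub : (Finset.range N).filter (fun i => J i ≤ j ∧ j ≤ J (i + 1)) ⊆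
          C' ∪ A₁ ∪ A₂ := by
        intro i hi
        rw [Finset.mem_filter, Finset.mem_range] at hi
        obtain ⟨hiN, hJi, hJi1⟩ := hi
        simp only [Finset.mem_union, hC', hA₁, hA₂, Finset.mem_filter, Finset.mem_range]
        by_cases h1 : s j ≤ t i
        · by_cases h2 : t (i + 1) ≤ s (j + 1)
          · exact Or.inl (Or.inl ⟨hiN, h1, h2⟩)
          · push_neg at h2
            refine Or.inr ⟨hiN, ?_, h2⟩
            exact le_trans (hJub i hiN.le) (smono (J i + 1) (j + 1) (by omega) (by omega))
        · push_neg at h1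
          refine Or.inl (Or.inr ⟨hiN, h1, ?_⟩)
          exact le_trans (smono j (J (i + 1)) hJi1 (hJlt (i + 1)).le) (hJs (i + 1) hiN)
      have hcard1 : A₁.card ≤ 1 := by
        rw [Finset.card_le_one]
        intro i hi i' hi'
        rw [hA₁, Finset.mem_filter, Finset.mem_range] at hi hi'
        by_contra hne
        rcases Nat.lt_or_ge i i' with hlt | hge
        · have hmm : t (i + 1) ≤ t i' := tmono (i + 1) i' hlt hi'.1.le
          linarith [hi.2.2, hi'.2.1]
        · have hlt : i' < i := by omega
          have hmm : t (i' + 1) ≤ t i := tmono (i' + 1) i hlt hi.1.le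
          linarith [hi'.2.2, hi.2.1]
      have hcard2 : A₂.card ≤ 1 := by
        rw [Finset.card_le_one]
        intro i hi i' hi'
        rw [hA₂, Finset.mem_filter, Finset.mem_range] at hi hi'
        by_contra hne
        rcases Nat.lt_or_ge i i' with hlt | hge
        · have hmm : t (i + 1) ≤ t i' := tmono (i + 1) i' hlt hi'.1.le
          linarith [hi.2.2, hi'.2.1]
        · have hlt : i' < i := by omega
          have hmm : t (i' + 1) ≤ t i := tmono (i' + 1) i hlt hi.1.le
          linarith [hi'.2.2, hi.2.1]
      have hsepC : ∀ i ∈ C', ∀ i' ∈ C', i ≠ i' →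
          r / K ≤ dist (γ (t i)) (γ (t i')) := by
        intro i hi i' hi' hne
        rw [hC', Finset.mem_filter, Finset.mem_range] at hi hi'
        rcases Nat.lt_or_ge i i' with hlt | hge
        · exact hsep i i' hlt hi'.1
        · have hlt : i' < i := by omega
          rw [dist_comm]
          exact hsep i' i hlt hi.1
      have hRbC : ∀ i ∈ C', ∀ i' ∈ C', dist (γ (t i)) (γ (t i')) ≤ d * d := by
        intro i hi i' hi'
        rw [hC', Finset.mem_filter, Finset.mem_range] at hi hi'
        have hm1 : γ (t i) ∈ γ '' Set.Icc (s j) (s (j + 1)) :=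
          Set.mem_image_of_mem γ
            ⟨hi.2.1, le_trans (tmono i (i + 1) (Nat.le_succ i) hi.1) hi.2.2⟩
        have hm2 : γ (t i') ∈ γ '' Set.Icc (s j) (s (j + 1)) :=
          Set.mem_image_of_mem γ
            ⟨hi'.2.1, le_trans (tmono i' (i' + 1) (Nat.le_succ i') hi'.1) hi'.2.2⟩
        have hbj : IsBounded (γ '' Set.Icc (s j) (s (j + 1))) :=
          hbddsub _ (Set.Icc_subset_Icc (hs01 j hj.le).1 (hs01 (j + 1) hj).2)
        exact le_trans (dist_le_diam_of_mem hbj hm1 hm2) (hsize j hj).2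
      have hCcard : (C'.card : ℝ) ≤ (8 * K + 3) ^ 2 := by
        have hp := pack_lemma (r / K) (d * d) (by positivity) C' (fun i => γ (t i)) hsepC hRbC
        refine le_trans hp ?_
        have hq : 4 * (d * d) / (r / K) ≤ 8 * K := by
          rw [div_le_iff₀ (by positivity)]
          have h8 : 8 * K * (r / K) = 8 * r := by field_simp
          rw [h8]
          have hde : d ≤ d ^ (1 / α - 1) := by
            have hh := Real.rpow_le_rpow_of_exponent_ge hdpos hd1.le he1
            rwa [Real.rpow_one] at hh
          rw [hr]
          nlinarith
        have h0 : 0 ≤ 4 * (d * d) / (r / K) + 3 := by positivity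
        nlinarith
      have hcu : ((Finset.range N).filter (fun i => J i ≤ j ∧ j ≤ J (i + 1))).card ≤
          C'.card + A₁.card + A₂.card := by
        refine le_trans (Finset.card_le_card hsub) ?_
        refine le_trans (Finset.card_union_le _ _) ?_
        have := Finset.card_union_le C' A₁
        omega
      have hc1 : (((Finset.range N).filter (fun i => J i ≤ j ∧ j ≤ J (i + 1))).card : ℝ) ≤
          (C'.card : ℝ) + (A₁.card : ℝ) + (A₂.card : ℝ) := by exact_mod_cast hcu
      have hc2 : (A₁.card : ℝ) ≤ 1 := by exact_mod_cast hcard1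
      have hc3 : (A₂.card : ℝ) ≤ 1 := by exact_mod_cast hcard2
      linarith
    -- assemble
    have key1 : ∑ i ∈ Finset.range N, diam (γ '' Set.Icc (t i) (t (i + 1))) ≤
        ∑ i ∈ Finset.range N, ∑ j ∈ Finset.Icc (J i) (J (i + 1)),
          diam (γ '' Set.Icc (s j) (s (j + 1))) :=
      Finset.sum_le_sum (fun i hi => hpiece i (Finset.mem_range.mp hi))
    have key2 : ∑ i ∈ Finset.range N, ∑ j ∈ Finset.Icc (J i) (J (i + 1)),
          diam (γ '' Set.Icc (s j) (s (j + 1))) =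
        ∑ j ∈ Finset.range N₀,
          (((Finset.range N).filter (fun i => J i ≤ j ∧ j ≤ J (i + 1))).card : ℝ) *
            diam (γ '' Set.Icc (s j) (s (j + 1))) := by
      have hIcc : ∀ i, Finset.Icc (J i) (J (i + 1)) =
          (Finset.range N₀).filter (fun j => J i ≤ j ∧ j ≤ J (i + 1)) := by
        intro i
        ext j
        simp only [Finset.mem_Icc, Finset.mem_filter, Finset.mem_range]
        constructor
        · rintro ⟨h1, h2⟩; exact ⟨lt_of_le_of_lt h2 (hJlt (i + 1)), h1, h2⟩
        · tauto
      calc ∑ i ∈ Finset.range N, ∑ j ∈ Finset.Icc (J i) (J (i + 1)),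
            diam (γ '' Set.Icc (s j) (s (j + 1)))
          = ∑ i ∈ Finset.range N, ∑ j ∈ Finset.range N₀,
              if J i ≤ j ∧ j ≤ J (i + 1) then diam (γ '' Set.Icc (s j) (s (j + 1))) else 0 := by
            refine Finset.sum_congr rfl (fun i _ => ?_)
            rw [hIcc i, Finset.sum_filter]
        _ = ∑ j ∈ Finset.range N₀, ∑ i ∈ Finset.range N,
              if J i ≤ j ∧ j ≤ J (i + 1) then diam (γ '' Set.Icc (s j) (s (j + 1))) else 0 :=
            Finset.sum_comm
        _ = ∑ j ∈ Finset.range N₀,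
              (((Finset.range N).filter (fun i => J i ≤ j ∧ j ≤ J (i + 1))).card : ℝ) *
                diam (γ '' Set.Icc (s j) (s (j + 1))) := by
            refine Finset.sum_congr rfl (fun j _ => ?_)
            rw [← Finset.sum_filter, Finset.sum_const, nsmul_eq_mul]
    have key3 : ∑ j ∈ Finset.range N₀,
          (((Finset.range N).filter (fun i => J i ≤ j ∧ j ≤ J (i + 1))).card : ℝ) *
            diam (γ '' Set.Icc (s j) (s (j + 1))) ≤
        ((8 * K + 3) ^ 2 + 2) *
          ∑ j ∈ Finset.range N₀, diam (γ '' Set.Icc (s j) (s (j + 1))) := by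
      rw [Finset.mul_sum]
      apply Finset.sum_le_sum
      intro j hj
      exact mul_le_mul_of_nonneg_right (hcnt j (Finset.mem_range.mp hj)) diam_nonneg
    have hsum' : ∑ j ∈ Finset.range N₀, diam (γ '' Set.Icc (s j) (s (j + 1))) ≤ M₀ * d := by
      rw [div_le_iff₀ hdpos] at hsum
      linarith
    rw [div_le_iff₀ hdpos]
    have hfin : ((8 * K + 3) ^ 2 + 2) *
        ∑ j ∈ Finset.range N₀, diam (γ '' Set.Icc (s j) (s (j + 1))) ≤
        ((8 * K + 3) ^ 2 + 2) * (M₀ * d) := by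
      have hpos : (0:ℝ) ≤ (8 * K + 3) ^ 2 + 2 := by positivity
      exact mul_le_mul_of_nonneg_left hsum' hpos
    rw [key2] at key1
    have htot := le_trans key1 (le_trans key3 hfin)
    have hco : ((8 * K + 3) ^ 2 + 2) * (M₀ * d) = ((8 * K + 3) ^ 2 + 2) * M₀ * d := by ring
    linarith
end
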